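/- arXiv:2603.10539 — 4 statements merged into one kernel-verified Lean document; each statement's English description precedes it below -/
import Mathlib

section
/- Let T be an infinitely splitting, normal ω₁-tree. Suppose α < ω₁, g is an automorphism of T_{≤α}, X is a finite subset of level T_{α+1} with unique drop-downs to α (i.e., distinct elements of X have distinct predecessors in T_α), and Y is a finite subset of T_{α+1} disjoint from X. Then there is an automorphism g' of T_{≤α+1} extending g such that (i) for all x, y ∈ X, g'(x) = y if and only if g(x↾α) = y↾α, and (ii) g'[Y] is disjoint from X ∪ Y. -/
noncomputable section

open Cardinal Ordinal Set

/-- The height of a node of a tree. -/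
noncomputable def treeHt {T : Type*} [PartialOrder T]
    (hwo : ∀ t : T, IsWellOrder {s : T // s < t} (fun a b => (a : T) < (b : T)))
    (t : T) : Ordinal :=
  @Ordinal.type {s : T // s < t} (fun a b => (a : T) < (b : T)) (hwo t)

/-- `ω₁` as an ordinal. -/
noncomputable def w1 : Ordinal := (Cardinal.aleph 1).ord

/-- `g'`, an automorphism of `T_{≤ α+1}`, extends `g`, an automorphism of `T_{≤ α}`. -/
def ExtendsSucc {T : Type*} [PartialOrder T]
    (hwo : ∀ t : T, IsWellOrder {s : T // s < t} (fun a b => (a : T) < (b : T)))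
    (α : Ordinal)
    (g : {t : T // treeHt hwo t ≤ α} ≃o {t : T // treeHt hwo t ≤ α})
    (g' : {t : T // treeHt hwo t ≤ α + 1} ≃o {t : T // treeHt hwo t ≤ α + 1}) : Prop :=
  ∀ u : {t : T // treeHt hwo t ≤ α},
    g' ⟨(u : T), u.2.trans (le_self_add : α ≤ α + 1)⟩ =
      ⟨((g u : {t : T // treeHt hwo t ≤ α}) : T), (g u).2.trans (le_self_add : α ≤ α + 1)⟩

open Set Classical in
lemma exists_equiv_extend {τ : Type*} {A B : Set τ}
    (hAc : A.Countable) (hAi : A.Infinite) (hBc : B.Countable) (hBi : B.Infinite)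
    {F : Set τ} (hF : F.Finite) (hFA : F ⊆ A) {f : τ → τ}
    (hfB : ∀ x ∈ F, f x ∈ B) (hfi : Set.InjOn f F) :
    ∃ e : A ≃ B, ∀ x (hx : x ∈ F), (e ⟨x, hFA hx⟩ : τ) = f x := by
  classical
  have hF'B : f '' F ⊆ B := by rintro _ ⟨x, hx, rfl⟩; exact hfB x hx
  have hA' : (A \ F).Countable ∧ (A \ F).Infinite :=
    ⟨hAc.mono Set.diff_subset, hAi.diff hF⟩
  have hB' : (B \ f '' F).Countable ∧ (B \ f '' F).Infinite :=
    ⟨hBc.mono Set.diff_subset, hBi.diff (hF.image f)⟩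
  obtain ⟨dA⟩ := Set.countable_infinite_iff_nonempty_denumerable.1 hA'
  obtain ⟨dB⟩ := Set.countable_infinite_iff_nonempty_denumerable.1 hB'
  let e' : ↥(A \ F) ≃ ↥(B \ f '' F) :=
    (@Denumerable.eqv _ dA).trans (@Denumerable.eqv _ dB).symm
  let eF : ↥F ≃ ↥(f '' F) := Equiv.Set.imageOfInjOn f F hfi
  let e : ↥A ≃ ↥B :=
    (Equiv.setCongr (Set.union_diff_cancel hFA).symm).trans <|
      (Equiv.Set.union disjoint_sdiff_self_right).trans <|
        (Equiv.sumCongr eF e').trans <|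
          ((Equiv.Set.union (disjoint_sdiff_self_right)).symm.trans
            (Equiv.setCongr (Set.union_diff_cancel hF'B)))
  refine ⟨e, fun x hx => ?_⟩
  have h1 : (Equiv.Set.union (s := F) (t := A \ F) disjoint_sdiff_self_right)
      ((Equiv.setCongr (Set.union_diff_cancel hFA).symm) ⟨x, hFA hx⟩) = Sum.inl ⟨x, hx⟩ :=
    Equiv.Set.union_apply_left _ hx
  show (((Equiv.Set.union (disjoint_sdiff_self_right)).symm.trans
            (Equiv.setCongr (Set.union_diff_cancel hF'B)))
      ((Equiv.sumCongr eF e')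
        ((Equiv.Set.union disjoint_sdiff_self_right)
          ((Equiv.setCongr (Set.union_diff_cancel hFA).symm) ⟨x, hFA hx⟩))) : τ) = f x
  rw [h1]
  simp [eF, Equiv.Set.imageOfInjOn]

/-- Proposition 2.8 / `prop: 54`: Let `T` be an infinitely splitting, normal
`ω₁`-tree, `α < ω₁`, `g` an automorphism of `T_{≤α}`, `X ⊆ T_{α+1}` finite with unique
drop-downs to `α`, and `Y ⊆ T_{α+1}` finite and disjoint from `X`.  Then there is an
automorphism `g'` of `T_{≤α+1}` extending `g` such that (i) for `x, y ∈ X`, `g'(x) = y`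
iff `g(x↾α) = y↾α`, and (ii) `g'[Y] ∩ (X ∪ Y) = ∅`. -/
theorem separated_automorphism_extension {T : Type*} [PartialOrder T]
    (hwo : ∀ t : T, IsWellOrder {s : T // s < t} (fun a b => (a : T) < (b : T)))
    -- `T` is an `ω₁`-tree:
    (hht : ∀ t : T, treeHt hwo t < w1)
    (hlevels_countable : ∀ α < w1, Set.Countable {t : T | treeHt hwo t = α})
    (hlevels_ne : ∀ α < w1, ∃ t : T, treeHt hwo t = α)
    -- `T` is normal:
    (hnormal₁ : ∀ α β : Ordinal, α < β → β < w1 →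
      ∀ t : T, treeHt hwo t = α → ∃ s : T, treeHt hwo s = β ∧ t < s)
    (hnormal₂ : ∀ β < w1, Order.IsSuccLimit β → ∀ s t : T, treeHt hwo s = β →
      treeHt hwo t = β → {u : T | u < s} = {u : T | u < t} → s = t)
    -- `T` is infinitely splitting:
    (hsplit : ∀ t : T, {s : T | t < s ∧ treeHt hwo s = treeHt hwo t + 1}.Infinite)
    (α : Ordinal) (hα : α < w1)
    (g : {t : T // treeHt hwo t ≤ α} ≃o {t : T // treeHt hwo t ≤ α})
    (X Y : Set T) (hXfin : X.Finite) (hYfin : Y.Finite)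
    (hX : ∀ x ∈ X, treeHt hwo x = α + 1) (hY : ∀ y ∈ Y, treeHt hwo y = α + 1)
    -- `X` has unique drop-downs to `α`:
    (hXdrop : ∀ x ∈ X, ∀ y ∈ X, x ≠ y →
      ¬ ∃ u : T, treeHt hwo u = α ∧ u < x ∧ u < y)
    (hXY : X ∩ Y = ∅) :
    ∃ g' : {t : T // treeHt hwo t ≤ α + 1} ≃o {t : T // treeHt hwo t ≤ α + 1},
      ExtendsSucc hwo α g g' ∧
      -- (i) `X ↾ α` and `X` are `g'`-consistent:
      (∀ x, ∀ hx : x ∈ X, ∀ y, ∀ hy : y ∈ X,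
        (g' ⟨x, (hX x hx).le⟩ = ⟨y, (hX y hy).le⟩ ↔
          (∀ u v : {t : T // treeHt hwo t ≤ α}, (u : T) < x → treeHt hwo (u : T) = α →
            (v : T) < y → treeHt hwo (v : T) = α → g u = v))) ∧
      -- (ii) `g'[Y] ∩ (X ∪ Y) = ∅`:
      (∀ y, ∀ hy : y ∈ Y, ((g' ⟨y, (hY y hy).le⟩ : {t : T // treeHt hwo t ≤ α + 1}) : T) ∉ X ∪ Y) := by
  classical
  -- basic ordinal facts
  have hsucc : α < α + 1 := by
    rw [Ordinal.add_one_eq_succ]; exact Order.lt_succ α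
  have hα1 : α + 1 < w1 := by
    rw [Ordinal.add_one_eq_succ]
    exact (Cardinal.isSuccLimit_ord (Cardinal.aleph0_le_aleph 1)).succ_lt hα
  -- basic tree facts
  have Ltypein : ∀ (s t : T) (hst : s < t), treeHt hwo s =
      @Ordinal.typein {x : T // x < t} (fun a b => (a:T) < (b:T)) (hwo t) ⟨s, hst⟩ := by
    intro s t hst
    haveI := hwo t
    rw [← Ordinal.type_subrel]
    exact RelIso.ordinal_type_eq
      ⟨⟨fun x => ⟨⟨x.1, x.2.trans hst⟩, x.2⟩, fun y => ⟨y.1.1, y.2⟩,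
        fun x => rfl, fun y => rfl⟩, Iff.rfl⟩
  have Llt : ∀ {s t : T}, s < t → treeHt hwo s < treeHt hwo t := by
    intro s t h
    haveI := hwo t
    rw [Ltypein s t h]
    exact Ordinal.typein_lt_type _ _
  have Luniq : ∀ {t s₁ s₂ : T}, s₁ < t → s₂ < t →
      treeHt hwo s₁ = treeHt hwo s₂ → s₁ = s₂ := by
    intro t s₁ s₂ h₁ h₂ he
    haveI := hwo t
    rw [Ltypein s₁ t h₁, Ltypein s₂ t h₂] at he
    exact congrArg Subtype.val (Ordinal.typein_injective _ he)
  have Lex : ∀ (t : T) (β : Ordinal), β < treeHt hwo t → ∃ s, s < t ∧ treeHt hwo s = β := by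
    intro t β hβ
    haveI := hwo t
    refine ⟨(Ordinal.enum _ ⟨β, hβ⟩ : {x : T // x < t}).1,
      (Ordinal.enum (fun a b : {x : T // x < t} => (a:T) < (b:T)) ⟨β, hβ⟩).2, ?_⟩
    rw [Ltypein _ t (Ordinal.enum (fun a b : {x : T // x < t} => (a:T) < (b:T)) ⟨β, hβ⟩).2]
    exact Ordinal.typein_enum _ _
  have Lcomp : ∀ {t s₁ s₂ : T}, s₁ < t → s₂ < t → s₁ < s₂ ∨ s₁ = s₂ ∨ s₂ < s₁ := by
    intro t s₁ s₂ h₁ h₂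
    haveI := hwo t
    rcases @trichotomous _ _ (hwo t).toTrichotomous ⟨s₁, h₁⟩ ⟨s₂, h₂⟩ with h | h | h
    · exact Or.inl h
    · exact Or.inr (Or.inl (congrArg Subtype.val h))
    · exact Or.inr (Or.inr h)
  -- order isos of T_{≤α} preserve heights
  have Liso : ∀ (e : {t : T // treeHt hwo t ≤ α} ≃o {t : T // treeHt hwo t ≤ α})
      (u : {t : T // treeHt hwo t ≤ α}),
      treeHt hwo ((e u : {t : T // treeHt hwo t ≤ α}) : T) = treeHt hwo (u : T) := by
    intro e u
    refine RelIso.ordinal_type_eq ?_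
    refine ⟨⟨fun x => ⟨((e.symm ⟨x.1, ((Llt x.2).trans_le (e u).2).le⟩ :
        {t : T // treeHt hwo t ≤ α}) : T), ?_⟩,
      fun y => ⟨((e ⟨y.1, ((Llt y.2).trans_le u.2).le⟩ : {t : T // treeHt hwo t ≤ α}) : T), ?_⟩,
      ?_, ?_⟩, ?_⟩
    · have h1 : (⟨x.1, ((Llt x.2).trans_le (e u).2).le⟩ : {t : T // treeHt hwo t ≤ α}) < e u :=
        Subtype.coe_lt_coe.1 x.2
      have h2 := e.symm.lt_iff_lt.2 h1
      rw [e.symm_apply_apply] at h2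
      exact Subtype.coe_lt_coe.2 h2
    · have h1 : (⟨y.1, ((Llt y.2).trans_le u.2).le⟩ : {t : T // treeHt hwo t ≤ α}) < u :=
        Subtype.coe_lt_coe.1 y.2
      have h2 := e.lt_iff_lt.2 h1
      exact Subtype.coe_lt_coe.2 h2
    · intro x
      ext
      simp
    · intro y
      ext
      simp
    · intro a b
      exact Subtype.coe_lt_coe.trans (e.symm.lt_iff_lt.trans Subtype.mk_lt_mk)
  -- the maps induced by g and g.symm on T
  set gm : T → T := fun u => if h : treeHt hwo u ≤ α then ((g ⟨u, h⟩ : {t : T // treeHt hwo t ≤ α}) : T) else u with hgm_def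
  set gi : T → T := fun u => if h : treeHt hwo u ≤ α then ((g.symm ⟨u, h⟩ : {t : T // treeHt hwo t ≤ α}) : T) else u with hgi_def
  have hgm_eq : ∀ (u : T) (h : treeHt hwo u ≤ α),
      gm u = ((g ⟨u, h⟩ : {t : T // treeHt hwo t ≤ α}) : T) := by
    intro u h; rw [hgm_def]; simp only; rw [dif_pos h]
  have hgi_eq : ∀ (u : T) (h : treeHt hwo u ≤ α),
      gi u = ((g.symm ⟨u, h⟩ : {t : T // treeHt hwo t ≤ α}) : T) := by
    intro u h; rw [hgi_def]; simp only; rw [dif_pos h]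
  have hgm_ht : ∀ (u : T), treeHt hwo u ≤ α → treeHt hwo (gm u) = treeHt hwo u := by
    intro u h; rw [hgm_eq u h]; exact Liso g ⟨u, h⟩
  have hgi_ht : ∀ (u : T), treeHt hwo u ≤ α → treeHt hwo (gi u) = treeHt hwo u := by
    intro u h
    rw [hgi_eq u h]
    exact Liso (OrderIso.symm g) ⟨u, h⟩
  have hgigm : ∀ (u : T), treeHt hwo u ≤ α → gi (gm u) = u := by
    intro u h
    rw [hgm_eq u h, hgi_eq _ (g ⟨u, h⟩).2]
    exact congrArg Subtype.val (g.symm_apply_apply ⟨u, h⟩)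
  have hgmgi : ∀ (u : T), treeHt hwo u ≤ α → gm (gi u) = u := by
    intro u h
    rw [hgi_eq u h, hgm_eq _ (g.symm ⟨u, h⟩).2]
    exact congrArg Subtype.val (g.apply_symm_apply ⟨u, h⟩)
  -- the predecessor function on level α+1
  have hpredEx : ∀ t : T, ∃ s : T, treeHt hwo t = α + 1 → s < t ∧ treeHt hwo s = α := by
    intro t
    by_cases h : treeHt hwo t = α + 1
    · obtain ⟨s, hs⟩ := Lex t α (by rw [h]; exact hsucc)
      exact ⟨s, fun _ => hs⟩
    · exact ⟨t, fun h' => absurd h' h⟩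
  choose pred hpred using hpredEx
  -- successor sets
  set S : T → Set T := fun u => {s : T | u < s ∧ treeHt hwo s = α + 1} with hS_def
  have hSpred : ∀ (u : T), treeHt hwo u = α → ∀ s ∈ S u, pred s = u := by
    intro u hu s hs
    exact Luniq (hpred s hs.2).1 hs.1 ((hpred s hs.2).2.trans hu.symm)
  have hXuniq : ∀ (w : T), treeHt hwo w = α → ∀ x ∈ X ∩ S w, ∀ y ∈ X ∩ S w, x = y := by
    intro w hw x hx y hy
    by_contra hne
    exact hXdrop x hx.1 y hy.1 hne ⟨w, hw, hx.2.1, hy.2.1⟩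
  have hSc : ∀ u : T, (S u).Countable := by
    intro u
    exact (hlevels_countable (α + 1) hα1).mono (fun s hs => hs.2)
  have hSi : ∀ u : T, treeHt hwo u = α → (S u).Infinite := by
    intro u hu
    have := hsplit u
    rw [hu] at this
    exact this
  -- the per-node equivalences
  have claim : ∀ (u : T), treeHt hwo u = α → ∃ e : ↥(S u) ≃ ↥(S (gm u)),
      (∀ x (hx : x ∈ X) (hxs : x ∈ S u), ∀ y ∈ X, ∀ hys : y ∈ S (gm u),
        ((e ⟨x, hxs⟩ : ↥(S (gm u))) : T) = y) ∧
      (∀ z (hz : z ∈ Y) (hzs : z ∈ S u), ((e ⟨z, hzs⟩ : ↥(S (gm u))) : T) ∉ X ∪ Y) := by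
    intro u hu
    have hgu : treeHt hwo (gm u) = α := (hgm_ht u hu.le).trans hu
    have hXYfin : (X ∪ Y).Finite := hXfin.union hYfin
    have hfresh : (S (gm u) \ (X ∪ Y)).Infinite := (hSi _ hgu).diff hXYfin
    have hFfin : ((X ∪ Y) ∩ S u).Finite := hXYfin.inter_of_left _
    have hemb : Nonempty (↥((X ∪ Y) ∩ S u) ↪ ↥(S (gm u) \ (X ∪ Y))) := by
      rw [← Cardinal.le_def]
      refine le_of_lt (lt_of_lt_of_le hFfin.lt_aleph0 ?_)
      rw [← Cardinal.infinite_iff]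
      exact hfresh.to_subtype
    obtain ⟨j⟩ := hemb
    set f : T → T := fun t =>
      if hc : t ∈ X ∧ (X ∩ S (gm u)).Nonempty then hc.2.some
      else if hd : t ∈ (X ∪ Y) ∩ S u then (j ⟨t, hd⟩ : T) else t with hf_def
    have hfX : ∀ (t : T), t ∈ X → (X ∩ S (gm u)).Nonempty →
        f t ∈ X ∩ S (gm u) := by
      intro t htX hne
      rw [hf_def]
      simp only
      rw [dif_pos ⟨htX, hne⟩]
      exact hne.some_mem
    have hfj : ∀ (t : T), t ∉ X ∨ ¬(X ∩ S (gm u)).Nonempty → ∀ hd : t ∈ (X ∪ Y) ∩ S u,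
        f t = (j ⟨t, hd⟩ : T) := by
      intro t hcond hd
      rw [hf_def]
      simp only
      rw [dif_neg (by rintro ⟨h1, h2⟩; rcases hcond with h | h; exacts [h h1, h h2]),
        dif_pos hd]
    have hfB : ∀ t ∈ (X ∪ Y) ∩ S u, f t ∈ S (gm u) := by
      intro t ht
      by_cases hc : t ∈ X ∧ (X ∩ S (gm u)).Nonempty
      · exact (hfX t hc.1 hc.2).2
      · rw [hfj t (not_and_or.mp hc) ht]
        exact (j ⟨t, ht⟩).2.1
    have hfi : Set.InjOn f ((X ∪ Y) ∩ S u) := by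
      intro t₁ ht₁ t₂ ht₂ hft
      by_cases hc₁ : t₁ ∈ X ∧ (X ∩ S (gm u)).Nonempty
      · by_cases hc₂ : t₂ ∈ X ∧ (X ∩ S (gm u)).Nonempty
        · exact hXuniq u hu t₁ ⟨hc₁.1, ht₁.2⟩ t₂ ⟨hc₂.1, ht₂.2⟩
        · exfalso
          have h1 := hfX t₁ hc₁.1 hc₁.2
          rw [hft, hfj t₂ (not_and_or.mp hc₂) ht₂] at h1
          exact (j ⟨t₂, ht₂⟩).2.2 (Or.inl h1.1)
      · by_cases hc₂ : t₂ ∈ X ∧ (X ∩ S (gm u)).Nonempty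
        · exfalso
          have h1 := hfX t₂ hc₂.1 hc₂.2
          rw [← hft, hfj t₁ (not_and_or.mp hc₁) ht₁] at h1
          exact (j ⟨t₁, ht₁⟩).2.2 (Or.inl h1.1)
        · rw [hfj t₁ (not_and_or.mp hc₁) ht₁,
            hfj t₂ (not_and_or.mp hc₂) ht₂] at hft
          have := j.injective (Subtype.ext hft)
          exact congrArg Subtype.val this
    obtain ⟨e, he⟩ := exists_equiv_extend (hSc u) (hSi u hu) (hSc (gm u)) (hSi _ hgu)
      hFfin (fun t ht => ht.2) hfB hfi
    refine ⟨e, ?_, ?_⟩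
    · intro x hx hxs y hy hys
      rw [he x ⟨Or.inl hx, hxs⟩]
      have hne : (X ∩ S (gm u)).Nonempty := ⟨y, hy, hys⟩
      have h1 := hfX x hx hne
      exact (hXuniq (gm u) hgu _ h1 y ⟨hy, hys⟩).symm ▸ rfl
    · intro z hz hzs
      rw [he z ⟨Or.inr hz, hzs⟩]
      have hzX : z ∉ X := fun h => by
        have : z ∈ X ∩ Y := ⟨h, hz⟩
        rw [hXY] at this
        exact this
      rw [hfj z (Or.inl hzX) ⟨Or.inr hz, hzs⟩]
      exact (j ⟨z, ⟨Or.inr hz, hzs⟩⟩).2.2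
  choose phi hphiX hphiY using claim
  have hnotle : ∀ t : T, treeHt hwo t = α + 1 → ¬ treeHt hwo t ≤ α := by
    intro t h hle
    rw [h] at hle
    exact absurd (hsucc.trans_le hle) (lt_irrefl α)
  have hle' : ∀ t : T, treeHt hwo t ≤ α + 1 → ¬ treeHt hwo t ≤ α → treeHt hwo t = α + 1 := by
    intro t h1 h2
    refine le_antisymm h1 ?_
    rw [Ordinal.add_one_eq_succ, Order.succ_le_iff]
    exact not_le.1 h2
  set G : {t : T // treeHt hwo t ≤ α + 1} → {t : T // treeHt hwo t ≤ α + 1} := fun t =>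
    if h : treeHt hwo t.1 ≤ α then ⟨gm t.1, ((hgm_ht t.1 h).trans_le h).trans hsucc.le⟩
    else ⟨((phi (pred t.1) (hpred t.1 (hle' t.1 t.2 h)).2
        ⟨t.1, ⟨(hpred t.1 (hle' t.1 t.2 h)).1, hle' t.1 t.2 h⟩⟩ : ↥(S (gm (pred t.1)))) : T),
      (phi (pred t.1) (hpred t.1 (hle' t.1 t.2 h)).2
        ⟨t.1, ⟨(hpred t.1 (hle' t.1 t.2 h)).1, hle' t.1 t.2 h⟩⟩).2.2.le⟩ with hG_def
  have hG1 : ∀ (t : {t : T // treeHt hwo t ≤ α + 1}) (h : treeHt hwo t.1 ≤ α),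
      (G t).1 = gm t.1 := by
    intro t h
    rw [hG_def]
    simp only
    rw [dif_pos h]
  have hG2 : ∀ (t : {t : T // treeHt hwo t ≤ α + 1}) (h : ¬ treeHt hwo t.1 ≤ α)
      (u : T) (hu : treeHt hwo u = α) (hmem : t.1 ∈ S u),
      (G t).1 = ((phi u hu ⟨t.1, hmem⟩ : ↥(S (gm u))) : T) := by
    intro t h u hu hmem
    have ht1 : treeHt hwo t.1 = α + 1 := hle' t.1 t.2 h
    have hpu : u = pred t.1 := (hSpred u hu t.1 hmem).symm
    subst hpu
    rw [hG_def]
    simp only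
    rw [dif_neg h]
  have hG_ht : ∀ t, treeHt hwo (G t).1 = treeHt hwo t.1 := by
    intro t
    by_cases h : treeHt hwo t.1 ≤ α
    · rw [hG1 t h]
      exact hgm_ht t.1 h
    · have ht1 := hle' t.1 t.2 h
      rw [hG2 t h (pred t.1) (hpred t.1 ht1).2 ⟨(hpred t.1 ht1).1, ht1⟩]
      exact ((phi (pred t.1) (hpred t.1 ht1).2 ⟨t.1, ⟨(hpred t.1 ht1).1, ht1⟩⟩).2.2).trans ht1.symm
  have hGinj : Function.Injective G := by
    intro t₁ t₂ hEq
    have hval : (G t₁).1 = (G t₂).1 := congrArg Subtype.val hEq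
    by_cases h1 : treeHt hwo t₁.1 ≤ α
    · have h2 : treeHt hwo t₂.1 ≤ α := by
        rw [← hG_ht t₂, ← hval, hG_ht t₁]
        exact h1
      rw [hG1 t₁ h1, hG1 t₂ h2, hgm_eq _ h1, hgm_eq _ h2] at hval
      have := g.injective (Subtype.ext hval)
      exact Subtype.ext (show (t₁ : T) = (t₂ : T) from congrArg (fun z => z.1) this)
    · have h2 : ¬ treeHt hwo t₂.1 ≤ α := by
        rw [← hG_ht t₂, ← hval, hG_ht t₁]
        exact h1
      have he1 : treeHt hwo t₁.1 = α + 1 := hle' _ t₁.2 h1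
      have he2 : treeHt hwo t₂.1 = α + 1 := hle' _ t₂.2 h2
      have hu₁ := (hpred t₁.1 he1).2
      have hu₂ := (hpred t₂.1 he2).2
      have hm₁ : t₁.1 ∈ S (pred t₁.1) := ⟨(hpred t₁.1 he1).1, he1⟩
      have hm₂ : t₂.1 ∈ S (pred t₂.1) := ⟨(hpred t₂.1 he2).1, he2⟩
      have hval₁ := hG2 t₁ h1 _ hu₁ hm₁
      have hval₂ := hG2 t₂ h2 _ hu₂ hm₂
      have hs₁ := (phi (pred t₁.1) hu₁ ⟨t₁.1, hm₁⟩).2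
      have hs₂ := (phi (pred t₂.1) hu₂ ⟨t₂.1, hm₂⟩).2
      have hlt₁ : gm (pred t₁.1) < (G t₂).1 := by rw [← hval, hval₁]; exact hs₁.1
      have hlt₂ : gm (pred t₂.1) < (G t₂).1 := by rw [hval₂]; exact hs₂.1
      have hgm12 : gm (pred t₁.1) = gm (pred t₂.1) :=
        Luniq hlt₁ hlt₂
          (((hgm_ht _ hu₁.le).trans hu₁).trans (((hgm_ht _ hu₂.le).trans hu₂)).symm)
      have hu12 : pred t₁.1 = pred t₂.1 := by
        have := congrArg gi hgm12
        rwa [hgigm _ hu₁.le, hgigm _ hu₂.le] at this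
      have hm₂' : t₂.1 ∈ S (pred t₁.1) := hu12.symm ▸ hm₂
      have hval₂' := hG2 t₂ h2 _ hu₁ hm₂'
      rw [hval₁, hval₂'] at hval
      have := (phi (pred t₁.1) hu₁).injective (Subtype.ext hval)
      exact Subtype.ext (show (t₁ : T) = (t₂ : T) from congrArg (fun z => z.1) this)
  have hGsurj : Function.Surjective G := by
    intro v
    by_cases h : treeHt hwo v.1 ≤ α
    · have hgiv : treeHt hwo (gi v.1) ≤ α := (hgi_ht v.1 h).trans_le h
      refine ⟨⟨gi v.1, hgiv.trans hsucc.le⟩, ?_⟩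
      apply Subtype.ext
      rw [hG1 _ hgiv]
      exact hgmgi v.1 h
    · have hv : treeHt hwo v.1 = α + 1 := hle' v.1 v.2 h
      have hwlt := (hpred v.1 hv).1
      have hwht := (hpred v.1 hv).2
      have hu : treeHt hwo (gi (pred v.1)) = α := (hgi_ht _ hwht.le).trans hwht
      have hgmu : gm (gi (pred v.1)) = pred v.1 := hgmgi _ hwht.le
      have hvS : v.1 ∈ S (gm (gi (pred v.1))) := by rw [hgmu]; exact ⟨hwlt, hv⟩
      have hs := ((phi (gi (pred v.1)) hu).symm ⟨v.1, hvS⟩).2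
      refine ⟨⟨((phi (gi (pred v.1)) hu).symm ⟨v.1, hvS⟩ : ↥(S (gi (pred v.1)))).1, hs.2.le⟩, ?_⟩
      apply Subtype.ext
      have hns : ¬ treeHt hwo ((phi (gi (pred v.1)) hu).symm ⟨v.1, hvS⟩ :
          ↥(S (gi (pred v.1)))).1 ≤ α := hnotle _ hs.2
      rw [hG2 _ hns (gi (pred v.1)) hu hs]
      show (((phi (gi (pred v.1)) hu) ((phi (gi (pred v.1)) hu).symm ⟨v.1, hvS⟩) :
          ↥(S (gm (gi (pred v.1))))) : T) = v.1
      rw [(phi (gi (pred v.1)) hu).apply_symm_apply]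
  have Lbelow : ∀ (s t w : T), treeHt hwo s ≤ α → w < t → treeHt hwo w = α →
      treeHt hwo t = α + 1 → (s < t ↔ s ≤ w) := by
    intro s t w hs hwt hw ht'
    constructor
    · intro hst
      rcases Lcomp hst hwt with h | h | h
      · exact h.le
      · exact h.le
      · exfalso
        have := Llt h
        rw [hw] at this
        exact absurd (this.trans_le hs) (lt_irrefl α)
    · intro hsw
      exact lt_of_le_of_lt hsw hwt
  have hlt : ∀ s t : {t : T // treeHt hwo t ≤ α + 1}, s < t ↔ G s < G t := by
    intro s t
    rw [← Subtype.coe_lt_coe (x := s) (y := t), ← Subtype.coe_lt_coe (x := G s) (y := G t)]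
    by_cases h2 : treeHt hwo t.1 ≤ α
    · by_cases h1 : treeHt hwo s.1 ≤ α
      · have e1 : (G s).1 = ((g ⟨s.1, h1⟩ : {t : T // treeHt hwo t ≤ α}) : T) :=
          (hG1 s h1).trans (hgm_eq _ h1)
        have e2 : (G t).1 = ((g ⟨t.1, h2⟩ : {t : T // treeHt hwo t ≤ α}) : T) :=
          (hG1 t h2).trans (hgm_eq _ h2)
        rw [e1, e2]
        exact Subtype.mk_lt_mk.symm.trans (g.lt_iff_lt.symm.trans Subtype.coe_lt_coe.symm)
      · refine iff_of_false (fun h => h1 ((Llt h).trans_le h2).le) (fun h => ?_)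
        have h3 : treeHt hwo (G s).1 < treeHt hwo (G t).1 := Llt h
        rw [hG_ht s, hG_ht t] at h3
        exact h1 (h3.trans_le h2).le
    · have ht' : treeHt hwo t.1 = α + 1 := hle' t.1 t.2 h2
      have hw := hpred t.1 ht'
      have hmemt : t.1 ∈ S (pred t.1) := ⟨hw.1, ht'⟩
      by_cases h1 : treeHt hwo s.1 ≤ α
      · have hGt : (G t).1 = ((phi (pred t.1) hw.2 ⟨t.1, hmemt⟩ : ↥(S (gm (pred t.1)))) : T) :=
          hG2 t h2 _ hw.2 hmemt
        have hmem := (phi (pred t.1) hw.2 ⟨t.1, hmemt⟩).2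
        rw [Lbelow s.1 t.1 (pred t.1) h1 hw.1 hw.2 ht', hG1 s h1, hGt,
          Lbelow (gm s.1) _ (gm (pred t.1)) ((hgm_ht _ h1).trans_le h1) hmem.1
            ((hgm_ht _ hw.2.le).trans hw.2) hmem.2,
          hgm_eq _ h1, hgm_eq _ hw.2.le]
        exact Subtype.mk_le_mk.symm.trans (g.le_iff_le.symm.trans Subtype.coe_le_coe.symm)
      · have hs' : treeHt hwo s.1 = α + 1 := hle' s.1 s.2 h1
        refine iff_of_false (fun h => ?_) (fun h => ?_)
        · have h3 := Llt h
          rw [hs', ht'] at h3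
          exact absurd h3 (lt_irrefl _)
        · have h3 : treeHt hwo (G s).1 < treeHt hwo (G t).1 := Llt h
          rw [hG_ht s, hG_ht t, hs', ht'] at h3
          exact absurd h3 (lt_irrefl _)
  let E : {t : T // treeHt hwo t ≤ α + 1} ≃ {t : T // treeHt hwo t ≤ α + 1} :=
    Equiv.ofBijective G ⟨hGinj, hGsurj⟩
  let g' : {t : T // treeHt hwo t ≤ α + 1} ≃o {t : T // treeHt hwo t ≤ α + 1} :=
    { toEquiv := E,
      map_rel_iff' := by
        intro a b
        show G a ≤ G b ↔ a ≤ b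
        constructor
        · intro h
          rcases lt_or_eq_of_le h with h' | h'
          · exact ((hlt a b).2 h').le
          · exact (hGinj h').le
        · intro h
          rcases lt_or_eq_of_le h with h' | h'
          · exact ((hlt a b).1 h').le
          · exact (congrArg G h').le }
  have hg'G : ∀ z, (g' z : T) = (G z).1 := fun z => rfl
  refine ⟨g', ?_, ?_, ?_⟩
  · intro u
    apply Subtype.ext
    rw [hg'G]
    rw [hG1 ⟨u.1, u.2.trans (le_self_add : α ≤ α + 1)⟩ u.2]
    exact hgm_eq u.1 u.2
  · intro x hx y hy
    have hx1 : treeHt hwo x = α + 1 := hX x hx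
    have hy1 : treeHt hwo y = α + 1 := hX y hy
    have hpx := hpred x hx1
    have hpy := hpred y hy1
    have hmx : x ∈ S (pred x) := ⟨hpx.1, hx1⟩
    have hGx : (g' ⟨x, hx1.le⟩ : T) =
        ((phi (pred x) hpx.2 ⟨x, hmx⟩ : ↥(S (gm (pred x)))) : T) := by
      rw [hg'G]
      exact hG2 ⟨x, hx1.le⟩ (hnotle x hx1) _ hpx.2 hmx
    constructor
    · intro hEq u v hux huα hvy hvα
      have hval : (g' ⟨x, hx1.le⟩ : T) = y := by rw [hEq]
      have hSmem := (phi (pred x) hpx.2 ⟨x, hmx⟩).2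
      rw [hGx] at hval
      rw [hval] at hSmem
      have hgmp : treeHt hwo (gm (pred x)) = α := (hgm_ht _ hpx.2.le).trans hpx.2
      have h1 : gm (pred x) = pred y := Luniq hSmem.1 hpy.1 (hgmp.trans hpy.2.symm)
      have h2 : u.1 = pred x := Luniq hux hpx.1 (huα.trans hpx.2.symm)
      have h3 : v.1 = pred y := Luniq hvy hpy.1 (hvα.trans hpy.2.symm)
      apply Subtype.ext
      calc ((g u : {t : T // treeHt hwo t ≤ α}) : T) = gm u.1 := (hgm_eq u.1 u.2).symm
        _ = gm (pred x) := by rw [h2]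
        _ = pred y := h1
        _ = v.1 := h3.symm
    · intro H
      have hthis := H ⟨pred x, hpx.2.le⟩ ⟨pred y, hpy.2.le⟩ hpx.1 hpx.2 hpy.1 hpy.2
      have hgmxy : gm (pred x) = pred y :=
        (hgm_eq (pred x) hpx.2.le).trans (congrArg Subtype.val hthis)
      have hyS : y ∈ S (gm (pred x)) := by
        rw [hgmxy]
        exact ⟨hpy.1, hy1⟩
      apply Subtype.ext
      show (g' ⟨x, hx1.le⟩ : T) = y
      rw [hGx]
      exact hphiX (pred x) hpx.2 x hx hmx y hy hyS
  · intro y hy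
    have hy1 := hY y hy
    have hpy := hpred y hy1
    have hmy : y ∈ S (pred y) := ⟨hpy.1, hy1⟩
    have hGy : ((g' ⟨y, hy1.le⟩ : {t : T // treeHt hwo t ≤ α + 1}) : T) =
        ((phi (pred y) hpy.2 ⟨y, hmy⟩ : ↥(S (gm (pred y)))) : T) := by
      rw [hg'G]
      exact hG2 ⟨y, hy1.le⟩ (hnotle y hy1) _ hpy.2 hmy
    rw [hGy]
    exact hphiY (pred y) hpy.2 y hy hmy
end
end

section
/- Let T be a normal, infinitely splitting ω₁-tree. Suppose α < ω₁, g is an automorphism of T_{≤α}, X is a finite subset of T_{α+1}, and for each x ∈ X and j ∈ {−1,1} we are given z^j_x ∈ T_{α+1} such that: g^j(x↾α) = (z^j_x)↾α; for distinct x₀, x₁ ∈ X and each j, z^j_{x₀} ≠ z^j_{x₁}; and if x₀ ∈ X, j ∈ {−1,1}, and z^j_{x₀} = x₁ ∈ X, then z^{−j}_{x₁} = x₀. Then there exists an automorphism h of T_{≤α+1} extending g such that h^j(x) = z^j_x for all x ∈ X and j ∈ {−1,1}. -/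
noncomputable section

open Cardinal Ordinal Set

section Helpers

variable {T : Type*} [PartialOrder T]
    (hwo : ∀ t : T, IsWellOrder {s : T // s < t} (fun a b => (a : T) < (b : T)))

lemma treeHt_eq_typein (s t : T) (h : s < t) :
    treeHt hwo s =
      @Ordinal.typein {u : T // u < t} (fun a b => (a : T) < (b : T)) (hwo t) ⟨s, h⟩ := by
  letI := hwo t
  rw [← @Ordinal.type_subrel _ _ (hwo t)]
  refine RelIso.ordinal_type_eq ?_
  refine ⟨⟨fun u => ⟨⟨u.1, lt_trans u.2 h⟩, u.2⟩, fun b => ⟨b.1.1, b.2⟩, fun u => rfl,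
    fun b => rfl⟩, Iff.rfl⟩

lemma treeHt_lt_of_lt {s t : T} (h : s < t) : treeHt hwo s < treeHt hwo t := by
  rw [treeHt_eq_typein hwo s t h]
  exact @Ordinal.typein_lt_type _ _ (hwo t) _

lemma exists_pred {α : Ordinal} (x : T) (hx : treeHt hwo x = α + 1) :
    ∃ p : T, p < x ∧ treeHt hwo p = α ∧ ∀ s : T, s < x → s ≤ p := by
  letI := hwo x
  have hlt : α < treeHt hwo x := by rw [hx, Ordinal.add_one_eq_succ]; exact Order.lt_succ α
  obtain ⟨p, hp⟩ := Ordinal.typein_surj (fun a b : {s : T // s < x} => (a : T) < (b : T)) hlt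
  refine ⟨p.1, p.2, by rw [treeHt_eq_typein hwo p.1 x p.2]; exact hp, ?_⟩
  intro s hs
  have h1 : Ordinal.typein (fun a b : {s : T // s < x} => (a : T) < (b : T)) ⟨s, hs⟩
      ≤ Ordinal.typein (fun a b : {s : T // s < x} => (a : T) < (b : T)) p := by
    rw [hp]
    have := @Ordinal.typein_lt_type _ (fun a b : {s : T // s < x} => (a : T) < (b : T)) (hwo x)
      ⟨s, hs⟩
    rw [show treeHt hwo x = Ordinal.type (fun a b : {s : T // s < x} => (a : T) < (b : T))
      from rfl] at hx
    rw [hx, Ordinal.add_one_eq_succ, Order.lt_succ_iff] at this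
    exact this
  rw [Ordinal.typein_le_typein] at h1
  rcases trichotomous_of (fun a b : {s : T // s < x} => (a : T) < (b : T)) ⟨s, hs⟩ p with h | h | h
  · exact le_of_lt h
  · exact le_of_eq (congrArg Subtype.val h)
  · exact absurd h h1

lemma treeHt_orderIso {α : Ordinal}
    (G : {t : T // treeHt hwo t ≤ α} ≃o {t : T // treeHt hwo t ≤ α})
    (a : {t : T // treeHt hwo t ≤ α}) : treeHt hwo ((G a : {t : T // treeHt hwo t ≤ α}) : T)
      = treeHt hwo (a : T) := by
  symm
  refine RelIso.ordinal_type_eq ?_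
  have hmem : ∀ s : T, s < (a : T) → treeHt hwo s ≤ α :=
    fun s hs => le_of_lt (lt_of_lt_of_le (treeHt_lt_of_lt hwo hs) a.2)
  have hmem' : ∀ s : T, s < ((G a : {t : T // treeHt hwo t ≤ α}) : T) → treeHt hwo s ≤ α :=
    fun s hs => le_of_lt (lt_of_lt_of_le (treeHt_lt_of_lt hwo hs) (G a).2)
  refine ⟨⟨fun u => ⟨(G ⟨u.1, hmem u.1 u.2⟩ : _), ?_⟩,
      fun v => ⟨(G.symm ⟨v.1, hmem' v.1 v.2⟩ : _), ?_⟩, ?_, ?_⟩, ?_⟩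
  · have : (⟨u.1, hmem u.1 u.2⟩ : {t : T // treeHt hwo t ≤ α}) < a := u.2
    exact (G.lt_iff_lt.mpr this : G _ < G a)
  · have : (⟨v.1, hmem' v.1 v.2⟩ : {t : T // treeHt hwo t ≤ α}) < G a := v.2
    have := G.symm.lt_iff_lt.mpr this
    rw [G.symm_apply_apply] at this
    exact this
  · intro u
    ext
    simp
  · intro v
    ext
    simp
  · intro u v
    constructor
    · intro h
      have h' : G ⟨u.1, hmem u.1 u.2⟩ < G ⟨v.1, hmem v.1 v.2⟩ := Subtype.coe_lt_coe.mp h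
      exact Subtype.mk_lt_mk.mp (G.lt_iff_lt.mp h')
    · intro h
      have h' : (⟨u.1, hmem u.1 u.2⟩ : {t : T // treeHt hwo t ≤ α}) < ⟨v.1, hmem v.1 v.2⟩ :=
        Subtype.mk_lt_mk.mpr h
      exact Subtype.coe_lt_coe.mpr (G.lt_iff_lt.mpr h')

lemma extend_bij {β : Type*} [Nonempty β] {S₁ S₂ : Set β} (h₁c : S₁.Countable) (h₁i : S₁.Infinite)
    (h₂c : S₂.Countable) (h₂i : S₂.Infinite) {D : Set β} (hD : D.Finite) (hDS : D ⊆ S₁)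
    {f : β → β} (hmap : Set.MapsTo f D S₂) (hinj : Set.InjOn f D) :
    ∃ F : β → β, Set.BijOn F S₁ S₂ ∧ Set.EqOn F f D := by
  classical
  have h1i : (S₁ \ D).Infinite := h₁i.diff hD
  have h2i : (S₂ \ f '' D).Infinite := h₂i.diff (hD.image f)
  haveI c1 : Countable ↥(S₁ \ D) := (h₁c.mono diff_subset).to_subtype
  haveI i1 : Infinite ↥(S₁ \ D) := h1i.to_subtype
  haveI c2 : Countable ↥(S₂ \ f '' D) := (h₂c.mono diff_subset).to_subtype
  haveI i2 : Infinite ↥(S₂ \ f '' D) := h2i.to_subtype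
  obtain ⟨d1⟩ := nonempty_denumerable ↥(S₁ \ D)
  obtain ⟨d2⟩ := nonempty_denumerable ↥(S₂ \ f '' D)
  let e : ↥(S₁ \ D) ≃ ↥(S₂ \ f '' D) :=
    (@Denumerable.eqv _ d1).trans (@Denumerable.eqv _ d2).symm
  refine ⟨fun b => if hb : b ∈ S₁ \ D then (e ⟨b, hb⟩ : β) else f b, ⟨?_, ?_, ?_⟩, ?_⟩
  · intro b hb
    by_cases hbd : b ∈ S₁ \ D
    · simp only [hbd, dif_pos]
      exact (e ⟨b, hbd⟩).2.1
    · have hbD : b ∈ D := by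
        by_contra hc
        exact hbd ⟨hb, hc⟩
      simp only [hbd, dif_neg, not_false_iff]
      exact hmap hbD
  · intro b₁ hb₁ b₂ hb₂ heq
    by_cases h₁d : b₁ ∈ S₁ \ D <;> by_cases h₂d : b₂ ∈ S₁ \ D
    · simp only [h₁d, h₂d, dif_pos] at heq
      have := e.injective (Subtype.val_injective heq)
      exact congrArg Subtype.val this
    · have hbD : b₂ ∈ D := by by_contra hc; exact h₂d ⟨hb₂, hc⟩
      simp only [h₁d, h₂d, dif_pos, dif_neg, not_false_iff] at heq
      exact absurd (heq ▸ mem_image_of_mem f hbD) (e ⟨b₁, h₁d⟩).2.2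
    · have hbD : b₁ ∈ D := by by_contra hc; exact h₁d ⟨hb₁, hc⟩
      simp only [h₁d, h₂d, dif_pos, dif_neg, not_false_iff] at heq
      exact absurd (heq ▸ mem_image_of_mem f hbD) ((e ⟨b₂, h₂d⟩).2.2 ∘ fun h => h)
    · have hbD₁ : b₁ ∈ D := by by_contra hc; exact h₁d ⟨hb₁, hc⟩
      have hbD₂ : b₂ ∈ D := by by_contra hc; exact h₂d ⟨hb₂, hc⟩
      simp only [h₁d, h₂d, dif_neg, not_false_iff] at heq
      exact hinj hbD₁ hbD₂ heq
  · intro s hs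
    by_cases hsd : s ∈ f '' D
    · obtain ⟨b, hb, rfl⟩ := hsd
      have hbd : b ∉ S₁ \ D := fun h => h.2 hb
      exact ⟨b, hDS hb, by simp only [hbd, dif_neg, not_false_iff]⟩
    · have hmem : s ∈ S₂ \ f '' D := ⟨hs, hsd⟩
      refine ⟨(e.symm ⟨s, hmem⟩ : β), (e.symm ⟨s, hmem⟩).2.1, ?_⟩
      have hin : (e.symm ⟨s, hmem⟩ : β) ∈ S₁ \ D := (e.symm ⟨s, hmem⟩).2
      simp only [hin, dif_pos]
      have : (⟨(e.symm ⟨s, hmem⟩ : β), hin⟩ : ↥(S₁ \ D)) = e.symm ⟨s, hmem⟩ := rfl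
      rw [this, e.apply_symm_apply]
  · intro b hb
    have hbd : b ∉ S₁ \ D := fun h => h.2 hb
    simp only [hbd, dif_neg, not_false_iff]

end Helpers

/-- Proposition `prop: ext_prop`: Given an automorphism `g` of `T_{≤α}`, a
finite `X ⊆ T_{α+1}`, and prescribed values `z^j_x ∈ T_{α+1}` (for `x ∈ X`,
`j ∈ {-1,1}`, here coded by `Bool` with `true = 1`) satisfying the listed coherence
conditions, there is an automorphism `h` of `T_{≤α+1}` extending `g` with
`h^j(x) = z^j_x` for all `x ∈ X` and `j`. -/
theorem prescribed_automorphism_extension {T : Type*} [PartialOrder T]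
    (hwo : ∀ t : T, IsWellOrder {s : T // s < t} (fun a b => (a : T) < (b : T)))
    -- `T` is an `ω₁`-tree:
    (hht : ∀ t : T, treeHt hwo t < w1)
    (hlevels_countable : ∀ α < w1, Set.Countable {t : T | treeHt hwo t = α})
    (hlevels_ne : ∀ α < w1, ∃ t : T, treeHt hwo t = α)
    -- `T` is normal:
    (hnormal₁ : ∀ α β : Ordinal, α < β → β < w1 →
      ∀ t : T, treeHt hwo t = α → ∃ s : T, treeHt hwo s = β ∧ t < s)
    (hnormal₂ : ∀ β < w1, Order.IsSuccLimit β → ∀ s t : T, treeHt hwo s = β →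
      treeHt hwo t = β → {u : T | u < s} = {u : T | u < t} → s = t)
    -- `T` is infinitely splitting:
    (hsplit : ∀ t : T, {s : T | t < s ∧ treeHt hwo s = treeHt hwo t + 1}.Infinite)
    (α : Ordinal) (hα : α < w1)
    (g : {t : T // treeHt hwo t ≤ α} ≃o {t : T // treeHt hwo t ≤ α})
    (X : Set T) (hXfin : X.Finite) (hX : ∀ x ∈ X, treeHt hwo x = α + 1)
    (z : T → Bool → T)
    (hz_lvl : ∀ x ∈ X, ∀ j : Bool, treeHt hwo (z x j) = α + 1)
    -- `g^j(x↾α) = (z^j_x)↾α`: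
    (hz_drop : ∀ x ∈ X, ∀ j : Bool,
      ∀ u v : {t : T // treeHt hwo t ≤ α}, (u : T) < x → treeHt hwo (u : T) = α →
        (v : T) < z x j → treeHt hwo (v : T) = α → (cond j g g.symm) u = v)
    -- for distinct `x₀, x₁ ∈ X` and each `j`, `z^j_{x₀} ≠ z^j_{x₁}`:
    (hz_inj : ∀ x₀ ∈ X, ∀ x₁ ∈ X, x₀ ≠ x₁ → ∀ j : Bool, z x₀ j ≠ z x₁ j)
    -- if `z^j_{x₀} = x₁ ∈ X` then `z^{-j}_{x₁} = x₀`: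
    (hz_sym : ∀ x₀ ∈ X, ∀ j : Bool, ∀ x₁ ∈ X, z x₀ j = x₁ → z x₁ (!j) = x₀) :
    ∃ h : {t : T // treeHt hwo t ≤ α + 1} ≃o {t : T // treeHt hwo t ≤ α + 1},
      ExtendsSucc hwo α g h ∧
      ∀ x, ∀ hx : x ∈ X, ∀ j : Bool,
        (((cond j h h.symm) ⟨x, (hX x hx).le⟩ : {t : T // treeHt hwo t ≤ α + 1}) : T) = z x j := by
  classical
  obtain ⟨t₀, ht₀⟩ := hlevels_ne α hα
  haveI : Nonempty T := ⟨t₀⟩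
  have halt : (α : Ordinal) < α + 1 := by
    rw [Ordinal.add_one_eq_succ]; exact Order.lt_succ α
  have hα1 : α + 1 < w1 := by
    rw [Ordinal.add_one_eq_succ]
    exact (Cardinal.isSuccLimit_ord (Cardinal.aleph0_le_aleph 1)).succ_lt hα
  have hlt_succ : ∀ o : Ordinal, o < α + 1 → o ≤ α := fun o h => by
    rwa [Ordinal.add_one_eq_succ, Order.lt_succ_iff] at h
  have hsuccle : ∀ o : Ordinal, o ≤ α + 1 → ¬ o ≤ α → o = α + 1 := by
    intro o h1 h2
    refine le_antisymm h1 ?_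
    rw [Ordinal.add_one_eq_succ]
    exact Order.succ_le_of_lt (not_le.mp h2)
  have hnot : ∀ s : T, treeHt hwo s = α + 1 → ¬ treeHt hwo s ≤ α := by
    intro s h hc
    rw [h] at hc
    exact absurd (lt_of_lt_of_le halt hc) (lt_irrefl α)
  -- predecessors at level α
  have hpred_ex : ∀ x : T, treeHt hwo x = α + 1 →
      ∃ p : T, p < x ∧ treeHt hwo p = α ∧ ∀ s : T, s < x → s ≤ p :=
    fun x hx => exists_pred hwo x hx
  choose! pred hp1 hp2 hp3 using hpred_ex
  have hpred_uniq : ∀ x t : T, treeHt hwo x = α + 1 → t < x → treeHt hwo t = α → t = pred x := by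
    intro x t hx htx ht
    rcases eq_or_lt_of_le (hp3 x hx t htx) with h | h
    · exact h
    · exfalso
      have := treeHt_lt_of_lt hwo h
      rw [ht, hp2 x hx] at this
      exact lt_irrefl _ this
  -- fibers
  set Fib : T → Set T := fun t => {s : T | t < s ∧ treeHt hwo s = α + 1} with hFibdef
  have hFib_inf : ∀ t : T, treeHt hwo t = α → (Fib t).Infinite := by
    intro t ht
    have h := hsplit t
    rw [ht] at h
    exact h
  have hFib_cnt : ∀ t : T, (Fib t).Countable :=
    fun t => (hlevels_countable (α + 1) hα1).mono (fun s hs => hs.2)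
  have hFib_pred : ∀ t s : T, treeHt hwo t = α → s ∈ Fib t → pred s = t :=
    fun t s ht hs => (hpred_uniq s t hs.2 hs.1 ht).symm
  have hmem_Fib_pred : ∀ s : T, treeHt hwo s = α + 1 → s ∈ Fib (pred s) :=
    fun s hs => ⟨hp1 s hs, hs⟩
  -- the action of g and g.symm on T
  set gv : T → T := fun t => if h : treeHt hwo t ≤ α then ((g ⟨t, h⟩ : _) : T) else t with hgvdef
  set gvs : T → T :=
    fun t => if h : treeHt hwo t ≤ α then ((g.symm ⟨t, h⟩ : _) : T) else t with hgvsdef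
  have hgv_eq : ∀ t (h : treeHt hwo t ≤ α), gv t = ((g ⟨t, h⟩ : _) : T) := fun t h => dif_pos h
  have hgvs_eq : ∀ t (h : treeHt hwo t ≤ α), gvs t = ((g.symm ⟨t, h⟩ : _) : T) :=
    fun t h => dif_pos h
  have hgv_lvl : ∀ t, treeHt hwo t ≤ α → treeHt hwo (gv t) = treeHt hwo t := by
    intro t h
    rw [hgv_eq t h]
    exact treeHt_orderIso hwo g ⟨t, h⟩
  have hgvs_lvl : ∀ t, treeHt hwo t ≤ α → treeHt hwo (gvs t) = treeHt hwo t := by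
    intro t h
    rw [hgvs_eq t h]
    exact treeHt_orderIso hwo g.symm ⟨t, h⟩
  have hgvs_gv : ∀ t, treeHt hwo t ≤ α → gvs (gv t) = t := by
    intro t h
    have h2 : treeHt hwo (gv t) ≤ α := by rw [hgv_lvl t h]; exact h
    have h3 : (⟨gv t, h2⟩ : {u : T // treeHt hwo u ≤ α}) = g ⟨t, h⟩ := Subtype.ext (hgv_eq t h)
    rw [hgvs_eq _ h2, h3, g.symm_apply_apply]
  have hgv_gvs : ∀ t, treeHt hwo t ≤ α → gv (gvs t) = t := by
    intro t h
    have h2 : treeHt hwo (gvs t) ≤ α := by rw [hgvs_lvl t h]; exact h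
    have h3 : (⟨gvs t, h2⟩ : {u : T // treeHt hwo u ≤ α}) = g.symm ⟨t, h⟩ :=
      Subtype.ext (hgvs_eq t h)
    rw [hgv_eq _ h2, h3, g.apply_symm_apply]
  have hgv_mono : ∀ s t : T, treeHt hwo s ≤ α → treeHt hwo t ≤ α → s ≤ t → gv s ≤ gv t := by
    intro s t hs ht hle
    rw [hgv_eq s hs, hgv_eq t ht]
    exact Subtype.coe_le_coe.mpr (g.le_iff_le.mpr (Subtype.mk_le_mk.mpr hle))
  have hgvs_mono : ∀ s t : T, treeHt hwo s ≤ α → treeHt hwo t ≤ α → s ≤ t → gvs s ≤ gvs t := by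
    intro s t hs ht hle
    rw [hgvs_eq s hs, hgvs_eq t ht]
    exact Subtype.coe_le_coe.mpr (g.symm.le_iff_le.mpr (Subtype.mk_le_mk.mpr hle))
  -- the prescribed finite partial map
  set D : Set T := X ∪ (fun x => z x false) '' X with hDdef
  have hD_fin : D.Finite := hXfin.union (hXfin.image _)
  set f₀ : T → T := fun t => if ht : ∃ x ∈ X, z x false = t then ht.choose
    else if t ∈ X then z t true else t with hf₀def
  have hf₀_choose : ∀ t (ht : ∃ x ∈ X, z x false = t), f₀ t = ht.choose := fun t ht => dif_pos ht
  have hf₀_X : ∀ x ∈ X, f₀ x = z x true := by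
    intro x hx
    by_cases h : ∃ x' ∈ X, z x' false = x
    · rw [hf₀_choose x h]
      obtain ⟨hx', hzx'⟩ := h.choose_spec
      have h2 := hz_sym h.choose hx' false x hx hzx'
      simpa using h2.symm
    · simp only [hf₀def]
      rw [dif_neg h, if_pos hx]
  have hf₀_Z : ∀ x ∈ X, f₀ (z x false) = x := by
    intro x hx
    have h : ∃ x' ∈ X, z x' false = z x false := ⟨x, hx, rfl⟩
    rw [hf₀_choose _ h]
    obtain ⟨hx', hzx'⟩ := h.choose_spec
    by_contra hne
    exact hz_inj h.choose hx' x hx hne false hzx'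
  have hf₀_inj : Set.InjOn f₀ D := by
    intro t₀ h₀ t₁ h₁ heq
    by_cases hx₀ : t₀ ∈ X <;> by_cases hx₁ : t₁ ∈ X
    · rw [hf₀_X t₀ hx₀, hf₀_X t₁ hx₁] at heq
      by_contra hne
      exact hz_inj t₀ hx₀ t₁ hx₁ hne true heq
    · obtain ⟨x₁, hx₁', hz₁⟩ : ∃ x ∈ X, z x false = t₁ := by
        rcases h₁ with h | ⟨x, hx, hxe⟩
        · exact absurd h hx₁
        · exact ⟨x, hx, hxe⟩
      rw [hf₀_X t₀ hx₀, ← hz₁, hf₀_Z x₁ hx₁'] at heq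
      have h2 := hz_sym t₀ hx₀ true x₁ hx₁' heq
      have h3 : z x₁ false = t₀ := by simpa using h2
      exact h3.symm.trans hz₁
    · obtain ⟨x₀, hx₀', hz₀⟩ : ∃ x ∈ X, z x false = t₀ := by
        rcases h₀ with h | ⟨x, hx, hxe⟩
        · exact absurd h hx₀
        · exact ⟨x, hx, hxe⟩
      rw [hf₀_X t₁ hx₁, ← hz₀, hf₀_Z x₀ hx₀'] at heq
      have h2 := hz_sym t₁ hx₁ true x₀ hx₀' heq.symm
      have h3 : z x₀ false = t₁ := by simpa using h2
      exact (hz₀.symm.trans h3).symm ▸ rfl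
    · obtain ⟨x₀, hx₀', hz₀⟩ : ∃ x ∈ X, z x false = t₀ := by
        rcases h₀ with h | ⟨x, hx, hxe⟩
        · exact absurd h hx₀
        · exact ⟨x, hx, hxe⟩
      obtain ⟨x₁, hx₁', hz₁⟩ : ∃ x ∈ X, z x false = t₁ := by
        rcases h₁ with h | ⟨x, hx, hxe⟩
        · exact absurd h hx₁
        · exact ⟨x, hx, hxe⟩
      rw [← hz₀, ← hz₁, hf₀_Z x₀ hx₀', hf₀_Z x₁ hx₁'] at heq
      rw [← hz₀, ← hz₁, heq]
  -- predecessors of the prescribed values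
  have hdrop : ∀ x ∈ X, gv (pred x) = pred (z x true) ∧ gvs (pred x) = pred (z x false) := by
    intro x hx
    have hx1 := hX x hx
    have hpα : treeHt hwo (pred x) = α := hp2 x hx1
    constructor
    · have h1 := hz_drop x hx true ⟨pred x, hpα.le⟩
        ⟨pred (z x true), (hp2 _ (hz_lvl x hx true)).le⟩
        (hp1 x hx1) hpα (hp1 _ (hz_lvl x hx true)) (hp2 _ (hz_lvl x hx true))
      rw [hgv_eq _ hpα.le]
      exact congrArg Subtype.val h1
    · have h1 := hz_drop x hx false ⟨pred x, hpα.le⟩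
        ⟨pred (z x false), (hp2 _ (hz_lvl x hx false)).le⟩
        (hp1 x hx1) hpα (hp1 _ (hz_lvl x hx false)) (hp2 _ (hz_lvl x hx false))
      rw [hgvs_eq _ hpα.le]
      exact congrArg Subtype.val h1
  -- fiber bijections
  have hFx : ∀ t : T, treeHt hwo t = α → ∃ F : T → T,
      Set.BijOn F (Fib t) (Fib (gv t)) ∧ Set.EqOn F f₀ (D ∩ Fib t) := by
    intro t ht
    have hgt : treeHt hwo (gv t) = α := by rw [hgv_lvl t ht.le, ht]
    refine extend_bij (hFib_cnt t) (hFib_inf t ht) (hFib_cnt (gv t)) (hFib_inf (gv t) hgt)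
      (hD_fin.inter_of_left _) inter_subset_right ?_ (hf₀_inj.mono inter_subset_left)
    rintro s ⟨hsD, hsF⟩
    have hspred : pred s = t := hFib_pred t s ht hsF
    by_cases hsX : s ∈ X
    · rw [hf₀_X s hsX]
      have h1 := (hdrop s hsX).1
      rw [hspred] at h1
      refine ⟨?_, hz_lvl s hsX true⟩
      rw [h1]
      exact hp1 _ (hz_lvl s hsX true)
    · obtain ⟨x, hx, hzx⟩ : ∃ x ∈ X, z x false = s := by
        rcases hsD with h | ⟨x, hx, hxe⟩
        · exact absurd h hsX
        · exact ⟨x, hx, hxe⟩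
      rw [← hzx, hf₀_Z x hx]
      have h2 := (hdrop x hx).2
      rw [hzx, hspred] at h2
      have hpx : treeHt hwo (pred x) = α := hp2 x (hX x hx)
      have h3 : gv t = pred x := by rw [← h2, hgv_gvs _ hpx.le]
      refine ⟨?_, hX x hx⟩
      rw [h3]
      exact hp1 x (hX x hx)
  choose! F hF1 hF2 using hFx
  set Finv : T → T → T := fun t => Function.invFunOn (F t) (Fib t) with hFinvdef
  have hInv : ∀ t, treeHt hwo t = α → Set.InvOn (Finv t) (F t) (Fib t) (Fib (gv t)) :=
    fun t ht => (hF1 t ht).invOn_invFunOn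
  have hInvBij : ∀ t, treeHt hwo t = α → Set.BijOn (Finv t) (Fib (gv t)) (Fib t) :=
    fun t ht => Set.BijOn.symm (hInv t ht).symm (hF1 t ht)
  -- the global map and its inverse
  set Hf : T → T := fun s => if h : treeHt hwo s ≤ α then gv s else F (pred s) s with hHfdef
  set Hi : T → T :=
    fun s => if h : treeHt hwo s ≤ α then gvs s else Finv (gvs (pred s)) s with hHidef
  have hle_cases : ∀ s : T, treeHt hwo s ≤ α + 1 → treeHt hwo s ≤ α ∨ treeHt hwo s = α + 1 :=
    fun s h => if h' : treeHt hwo s ≤ α then Or.inl h' else Or.inr (hsuccle _ h h')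
  have hHf_old : ∀ s, treeHt hwo s ≤ α → Hf s = gv s := fun s h => dif_pos h
  have hHi_old : ∀ s, treeHt hwo s ≤ α → Hi s = gvs s := fun s h => dif_pos h
  have hHf_new : ∀ s, treeHt hwo s = α + 1 → Hf s = F (pred s) s ∧ Hf s ∈ Fib (gv (pred s)) := by
    intro s hs
    have h1 : Hf s = F (pred s) s := dif_neg (hnot s hs)
    refine ⟨h1, ?_⟩
    rw [h1]
    exact (hF1 (pred s) (hp2 s hs)).1 (hmem_Fib_pred s hs)
  have hHi_new : ∀ s, treeHt hwo s = α + 1 →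
      Hi s = Finv (gvs (pred s)) s ∧ Hi s ∈ Fib (gvs (pred s)) := by
    intro s hs
    have hplvl : treeHt hwo (pred s) = α := hp2 s hs
    have ht'' : treeHt hwo (gvs (pred s)) = α := by rw [hgvs_lvl _ hplvl.le, hplvl]
    have h1 : Hi s = Finv (gvs (pred s)) s := dif_neg (hnot s hs)
    refine ⟨h1, ?_⟩
    rw [h1]
    have hsmem : s ∈ Fib (gv (gvs (pred s))) := by
      rw [hgv_gvs _ hplvl.le]
      exact hmem_Fib_pred s hs
    exact (hInvBij _ ht'').1 hsmem
  have hHf_lvl_old : ∀ s, treeHt hwo s ≤ α → treeHt hwo (Hf s) ≤ α := by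
    intro s h
    rw [hHf_old s h, hgv_lvl s h]
    exact h
  have hHi_lvl_old : ∀ s, treeHt hwo s ≤ α → treeHt hwo (Hi s) ≤ α := by
    intro s h
    rw [hHi_old s h, hgvs_lvl s h]
    exact h
  have hLI : ∀ s, treeHt hwo s ≤ α + 1 → Hi (Hf s) = s := by
    intro s hs
    rcases hle_cases s hs with h | h
    · rw [hHf_old s h, hHi_old _ (by rw [hgv_lvl s h]; exact h), hgvs_gv s h]
    · obtain ⟨h1, h2⟩ := hHf_new s h
      have hplvl : treeHt hwo (pred s) = α := hp2 s h
      have hgvlvl : treeHt hwo (gv (pred s)) = α := by rw [hgv_lvl _ hplvl.le, hplvl]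
      have h3 : treeHt hwo (Hf s) = α + 1 := h2.2
      have h4 : pred (Hf s) = gv (pred s) := hFib_pred _ _ hgvlvl h2
      have h5 : Hi (Hf s) = Finv (gvs (pred (Hf s))) (Hf s) := dif_neg (hnot _ h3)
      rw [h5, h4, hgvs_gv _ hplvl.le, h1]
      exact (hInv (pred s) hplvl).1 (hmem_Fib_pred s h)
  have hRI : ∀ s, treeHt hwo s ≤ α + 1 → Hf (Hi s) = s := by
    intro s hs
    rcases hle_cases s hs with h | h
    · rw [hHi_old s h, hHf_old _ (by rw [hgvs_lvl s h]; exact h), hgv_gvs s h]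
    · have hplvl : treeHt hwo (pred s) = α := hp2 s h
      have ht'' : treeHt hwo (gvs (pred s)) = α := by rw [hgvs_lvl _ hplvl.le, hplvl]
      obtain ⟨h1, h2⟩ := hHi_new s h
      have h3 : treeHt hwo (Hi s) = α + 1 := h2.2
      have h4 : pred (Hi s) = gvs (pred s) := hFib_pred _ _ ht'' h2
      have h5 : Hf (Hi s) = F (pred (Hi s)) (Hi s) := dif_neg (hnot _ h3)
      rw [h5, h4, h1]
      have hsmem : s ∈ Fib (gv (gvs (pred s))) := by
        rw [hgv_gvs _ hplvl.le]
        exact hmem_Fib_pred s h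
      exact (hInv _ ht'').2 hsmem
  have hmono : ∀ s u : T, treeHt hwo s ≤ α + 1 → treeHt hwo u ≤ α + 1 → s ≤ u →
      Hf s ≤ Hf u := by
    intro s u hs hu hle
    rcases eq_or_lt_of_le hle with rfl | hlt
    · exact le_refl _
    · have hslt : treeHt hwo s < treeHt hwo u := treeHt_lt_of_lt hwo hlt
      have hsle : treeHt hwo s ≤ α := hlt_succ _ (lt_of_lt_of_le hslt hu)
      rw [hHf_old s hsle]
      rcases hle_cases u hu with h | h
      · rw [hHf_old u h]
        exact hgv_mono s u hsle h hle
      · have hsp : s ≤ pred u := hp3 u h s hlt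
        have hplvl : treeHt hwo (pred u) = α := hp2 u h
        have h1 : gv s ≤ gv (pred u) := hgv_mono _ _ hsle hplvl.le hsp
        have h2 := (hHf_new u h).2.1
        exact le_of_lt (lt_of_le_of_lt h1 h2)
  have hmono' : ∀ s u : T, treeHt hwo s ≤ α + 1 → treeHt hwo u ≤ α + 1 → s ≤ u →
      Hi s ≤ Hi u := by
    intro s u hs hu hle
    rcases eq_or_lt_of_le hle with rfl | hlt
    · exact le_refl _
    · have hslt : treeHt hwo s < treeHt hwo u := treeHt_lt_of_lt hwo hlt
      have hsle : treeHt hwo s ≤ α := hlt_succ _ (lt_of_lt_of_le hslt hu)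
      rw [hHi_old s hsle]
      rcases hle_cases u hu with h | h
      · rw [hHi_old u h]
        exact hgvs_mono s u hsle h hle
      · have hsp : s ≤ pred u := hp3 u h s hlt
        have hplvl : treeHt hwo (pred u) = α := hp2 u h
        have h1 : gvs s ≤ gvs (pred u) := hgvs_mono _ _ hsle hplvl.le hsp
        have h2 := (hHi_new u h).2.1
        exact le_of_lt (lt_of_le_of_lt h1 h2)
  have hB : ∀ s : T, treeHt hwo s ≤ α + 1 → treeHt hwo (Hf s) ≤ α + 1 := by
    intro s hs
    rcases hle_cases s hs with h | h
    · exact (hHf_lvl_old s h).trans halt.le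
    · exact ((hHf_new s h).2.2).le
  have hB' : ∀ s : T, treeHt hwo s ≤ α + 1 → treeHt hwo (Hi s) ≤ α + 1 := by
    intro s hs
    rcases hle_cases s hs with h | h
    · exact (hHi_lvl_old s h).trans halt.le
    · exact ((hHi_new s h).2.2).le
  refine ⟨{ toFun := fun b => ⟨Hf b.1, hB b.1 b.2⟩
            invFun := fun b => ⟨Hi b.1, hB' b.1 b.2⟩
            left_inv := fun b => Subtype.ext (hLI b.1 b.2)
            right_inv := fun b => Subtype.ext (hRI b.1 b.2)
            map_rel_iff' := ?_ }, ?_, ?_⟩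
  · intro a b
    constructor
    · intro hle
      have h1 := hmono' (Hf a.1) (Hf b.1) (hB a.1 a.2) (hB b.1 b.2) hle
      rw [hLI a.1 a.2, hLI b.1 b.2] at h1
      exact h1
    · intro hle
      exact hmono a.1 b.1 a.2 b.2 hle
  · intro u
    apply Subtype.ext
    show Hf u.1 = _
    rw [hHf_old u.1 u.2, hgv_eq u.1 u.2]
  · intro x hx j
    cases j
    · show Hi x = z x false
      have hzlvl : treeHt hwo (z x false) = α + 1 := hz_lvl x hx false
      have hkey : Hf (z x false) = x := by
        rw [(hHf_new (z x false) hzlvl).1]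
        have hpz : treeHt hwo (pred (z x false)) = α := hp2 _ hzlvl
        rw [hF2 (pred (z x false)) hpz ⟨Or.inr ⟨x, hx, rfl⟩, hmem_Fib_pred _ hzlvl⟩]
        exact hf₀_Z x hx
      calc Hi x = Hi (Hf (z x false)) := by rw [hkey]
        _ = z x false := hLI _ hzlvl.le
    · show Hf x = z x true
      have hx1 := hX x hx
      rw [(hHf_new x hx1).1, hF2 (pred x) (hp2 x hx1) ⟨Or.inl hx, hmem_Fib_pred x hx1⟩]
      exact hf₀_X x hx
end
end

section
/- Let λ be an uncountable ordinal and μ a regular cardinal such that μ > 2^{ω₁} and γ^ω < μ for all γ < μ. Then the forcing K_λ is μ-Knaster: every family of μ-many conditions contains a subfamily of size μ of pairwise compatible conditions. -/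
noncomputable section

universe u

open Cardinal Ordinal Set

/-- `ω₁` as an ordinal. -/
noncomputable def omegaOne : Ordinal.{u} := (Cardinal.aleph 1).ord

/-- A node of `^{<ω₁}ω₁`: a function from a countable ordinal (its length) into `ω₁`,
coded canonically (value `0` beyond the length). -/
structure KNode : Type (u + 1) where
  len : Ordinal.{u}
  len_lt : len < omegaOne
  val : Ordinal.{u} → Ordinal.{u}
  val_lt : ∀ o, val o < omegaOne
  val_eq_zero : ∀ o, ¬ o < len → val o = 0

namespace KNode

/-- The extension (end-extension) order on nodes. -/
def le (s t : KNode) : Prop := s.len ≤ t.len ∧ ∀ o < s.len, t.val o = s.val o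

end KNode

/-- A condition of the forcing `K_λ`: a pair `(T, f)` where `T` is a normal, infinitely
splitting subtree of `^{<η+1}ω₁` of size at most `ω₁`, and `f` is a countable partial
function from `λ` to the top level `T ∩ ^{η}ω₁`. -/
structure KCond (lam : Ordinal.{u}) : Type (u + 1) where
  η : Ordinal.{u}
  η_lt : η < omegaOne
  T : Set KNode.{u}
  T_le : ∀ s ∈ T, s.len ≤ η
  /-- `T` is a subtree: closed under restrictions (initial segments). -/
  T_closed : ∀ s ∈ T, ∀ u : KNode, u.le s → u ∈ T
  /-- `T` has size at most `ω₁`. -/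
  T_card : Cardinal.mk T ≤ Cardinal.aleph 1
  /-- `T` is normal: every node extends to every higher level `≤ η`. -/
  T_normal : ∀ s ∈ T, ∀ β : Ordinal.{u}, s.len ≤ β → β ≤ η → ∃ t ∈ T, s.le t ∧ t.len = β
  /-- `T` is infinitely splitting. -/
  T_splitting : ∀ s ∈ T, s.len < η → {t ∈ T | s.le t ∧ t.len = s.len + 1}.Infinite
  f : Ordinal.{u} → Option KNode.{u}
  f_dom : {a : Ordinal.{u} | f a ≠ none}.Countable
  f_spec : ∀ a n, f a = some n → a < lam ∧ n ∈ T ∧ n.len = η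

namespace KCond

/-- The order on `K_λ`. -/
def le {lam : Ordinal.{u}} (q₁ q₀ : KCond lam) : Prop :=
  q₀.η ≤ q₁.η ∧
  {s ∈ q₁.T | s.len ≤ q₀.η} = q₀.T ∧
  (∀ a : Ordinal.{u}, q₀.f a ≠ none → q₁.f a ≠ none) ∧
  (∀ a n, q₀.f a = some n → ∃ m, q₁.f a = some m ∧ n.le m)

end KCond

universe v

instance KS.instWO (o : Ordinal) : IsWellOrder o.ToType (· < ·) := isWellOrder_lt

lemma pigeon {α β : Type v} {μ : Cardinal.{v}} (hreg : μ.IsRegular) (f : α → β)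
    (hα : #α = μ) (hβ : #β < μ) : ∃ b, #{a // f a = b} = μ := by
  by_contra h
  push_neg at h
  have hlt : ∀ b, #{a // f a = b} < μ := fun b =>
    lt_of_le_of_ne (hα ▸ mk_subtype_le _) (h b)
  have heq : #α = Cardinal.sum fun b => #{a // f a = b} := by
    rw [← mk_sigma]; exact mk_congr (Equiv.sigmaFiberEquiv f).symm
  have hs := Cardinal.sum_lt_of_isRegular hreg hβ hlt
  rw [← heq, hα] at hs
  exact lt_irrefl _ hs

section WSec
variable {c : Cardinal.{v}}

local notation "W" => c.ord.ToType

lemma W_bound (hc : c.IsRegular) {s : Set W} (hs : #s < c) :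
    ∃ b : W, ∀ x ∈ s, x < b := by
  have hlim := Cardinal.isSuccLimit_ord hc.1
  set ti : W → Ordinal.{v} := fun x => typein (α := c.ord.ToType) (· < ·) x with hti
  have htype : type (α := c.ord.ToType) (· < ·) = c.ord := type_toType _
  have hsup : (⨆ x : s, ti x.1) < c.ord := by
    apply Ordinal.iSup_lt_ord (by rwa [hc.cof_eq])
    intro i
    have := typein_lt_type (α := c.ord.ToType) (· < ·) i.1
    rwa [htype] at this
  have hsucc : (⨆ x : s, ti x.1) + 1 < c.ord := by rw [Ordinal.add_one_eq_succ]; exact hlim.succ_lt hsup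
  have hsucc' : (⨆ x : s, ti x.1) + 1 < type (α := c.ord.ToType) (· < ·) := by rw [htype]; exact hsucc
  obtain ⟨b, hb⟩ := typein_surj (α := c.ord.ToType) (· < ·) hsucc'
  refine ⟨b, fun x hx => ?_⟩
  have h1 : ti x ≤ ⨆ x : s, ti x.1 := Ordinal.le_iSup _ (⟨x, hx⟩ : s)
  have h2 : ti x < ti b := by
    rw [show ti b = _ from hb]; exact h1.trans_lt (lt_add_one _)
  exact (typein_lt_typein (α := c.ord.ToType) (· < ·)).1 h2

/-- `x` is a point below which countable sets are bounded. -/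
def Pt (x : c.ord.ToType) : Prop :=
  ∀ cs : Set c.ord.ToType, cs.Countable → (∀ y ∈ cs, y < x) → ∃ b < x, ∀ y ∈ cs, y ≤ b

lemma PD (hc : c.IsRegular) (hω₁ : aleph 1 < c) (g : W → W)
    (hg : ∀ x, Pt x → g x < x) :
    ∃ β : W, ¬ (#{x : W // Pt x ∧ g x ≤ β} < c) := by
  classical
  by_contra hcon
  push_neg at hcon
  haveI hWne : Nonempty W := Cardinal.mk_ne_zero_iff.1 (by rw [mk_ord_toType]; exact hc.pos.ne')
  have hwf : WellFounded ((· < ·) : W → W → Prop) := wellFounded_lt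
  -- the bumping function F
  have hFex : ∀ β : W, ∃ b : W, ∀ x ∈ insert β {x : W | Pt x ∧ g x ≤ β}, x < b := by
    intro β
    apply W_bound hc
    refine lt_of_le_of_lt (Cardinal.mk_insert_le) ?_
    exact Cardinal.add_lt_of_lt hc.1 (hcon β) (lt_of_lt_of_le Cardinal.one_lt_aleph0 hc.1)
  set F : W → W := fun β => (hFex β).choose with hF
  have hF1 : ∀ β : W, β < F β := fun β => (hFex β).choose_spec β (mem_insert _ _)
  have hF2 : ∀ β : W, ∀ x : W, Pt x → g x ≤ β → x < F β := fun β x h1 h2 =>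
    (hFex β).choose_spec x (mem_insert_of_mem _ ⟨h1, h2⟩)
  -- the strict-bound operator
  set SB : Set W → W := fun s => if H : ∃ b : W, ∀ x ∈ s, x < b then H.choose else hWne.some
    with hSB
  have hSBs : ∀ s : Set W, (∃ b : W, ∀ x ∈ s, x < b) → ∀ x ∈ s, x < SB s := by
    intro s H x hx
    rw [hSB]; simp only [dif_pos H]
    exact H.choose_spec x hx
  -- the ω₁-sequence
  set ω₁o : Ordinal.{v} := (Cardinal.aleph 1).ord with hω₁o
  have hω₁lim : Order.IsSuccLimit ω₁o := Cardinal.isSuccLimit_ord (Cardinal.aleph0_le_aleph 1)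
  set h : Ordinal.{v} → W :=
    Ordinal.lt_wf.fix (fun ξ ih => SB (range fun z : Iio ξ => F (ih z.1 z.2))) with hh
  have h_eq : ∀ ξ, h ξ = SB (range fun z : Iio ξ => F (h z.1)) := by
    intro ξ
    rw [hh]
    exact WellFounded.fix_eq _ _ _
  have hsmall : ∀ ξ : Ordinal.{v}, ξ ≤ ω₁o → #(range fun z : Iio ξ => F (h z.1)) < c := by
    intro ξ hξ
    have h1 := Cardinal.mk_range_le_lift (f := fun z : Iio ξ => F (h z.1))
    rw [Ordinal.mk_Iio_ordinal, Cardinal.lift_lift] at h1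
    have h2 : #(range fun z : Iio ξ => F (h z.1)) ≤ ξ.card := by
      have h1' : Cardinal.lift.{v+1,v} #(range fun z : Iio ξ => F (h z.1)) ≤
          Cardinal.lift.{v+1,v} ξ.card := by simpa using h1
      exact_mod_cast Cardinal.lift_le.1 h1'
    refine lt_of_le_of_lt h2 (lt_of_le_of_lt ?_ hω₁)
    have := Ordinal.card_le_card hξ
    rwa [hω₁o, Cardinal.card_ord] at this
  have h_lt : ∀ ξ ≤ ω₁o, ∀ ζ < ξ, F (h ζ) < h ξ := by
    intro ξ hξ ζ hζ
    rw [h_eq ξ]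
    exact hSBs _ (W_bound hc (hsmall ξ hξ)) _ (mem_range_self (⟨ζ, hζ⟩ : Iio ξ))
  have h_mono : ∀ ξ ≤ ω₁o, ∀ ζ < ξ, h ζ < h ξ := fun ξ hξ ζ hζ =>
    lt_trans (hF1 _) (h_lt ξ hξ ζ hζ)
  -- the least upper bound x*
  set UB : Set W := {b | ∀ ξ < ω₁o, h ξ ≤ b} with hUB
  have hUBne : UB.Nonempty := by
    obtain ⟨b, hb⟩ := W_bound hc (hsmall ω₁o le_rfl)
    refine ⟨b, fun ξ hξ => ?_⟩
    exact le_of_lt (lt_trans (hF1 _) (hb _ (mem_range_self (⟨ξ, hξ⟩ : Iio ω₁o))))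
  set x : W := hwf.min UB hUBne with hx
  have hxub : ∀ ξ < ω₁o, h ξ ≤ x := hwf.min_mem UB hUBne
  have hxlt : ∀ y : W, y < x → ∃ ξ < ω₁o, y < h ξ := by
    intro y hy
    by_contra hcon2
    push_neg at hcon2
    exact hwf.not_lt_min UB (fun ξ hξ => hcon2 ξ hξ) hy
  have hhx : ∀ ξ < ω₁o, h ξ < x := by
    intro ξ hξ
    refine lt_of_lt_of_le (h_mono (ξ+1) (hω₁lim.succ_lt hξ).le ξ (lt_add_one ξ)) ?_
    exact hxub _ (hω₁lim.succ_lt hξ)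
  -- x is a Pt point
  have hPt : Pt x := by
    intro cs hcs hcslt
    haveI := hcs.to_subtype
    have hsel : ∀ y : cs, ∃ ξ < ω₁o, (y : W) < h ξ := fun y => hxlt y (hcslt y y.2)
    choose ξf hξf1 hξf2 using hsel
    have hsup : (⨆ y : cs, ξf y) < ω₁o := by
      apply Ordinal.iSup_lt_ord _ hξf1
      rw [hω₁o, Cardinal.IsRegular.cof_eq Cardinal.isRegular_aleph_one]
      exact lt_of_le_of_lt Cardinal.mk_le_aleph0 Cardinal.aleph0_lt_aleph_one
    have hsup1 : (⨆ y : cs, ξf y) + 1 < ω₁o := hω₁lim.succ_lt hsup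
    refine ⟨h ((⨆ y : cs, ξf y) + 1), hhx _ hsup1, fun y hy => ?_⟩
    have : ξf ⟨y, hy⟩ < (⨆ y : cs, ξf y) + 1 :=
      lt_of_le_of_lt (Ordinal.le_iSup ξf ⟨y, hy⟩) (lt_add_one _)
    exact le_of_lt (lt_trans (hξf2 ⟨y, hy⟩) (h_mono _ hsup1.le _ this))
  -- contradiction
  obtain ⟨ξ, hξ, hgx⟩ := hxlt (g x) (hg x hPt)
  have h1 : x < F (h ξ) := hF2 (h ξ) x hPt hgx.le
  have h2 : F (h ξ) < h (ξ + 1) := h_lt (ξ+1) (hω₁lim.succ_lt hξ).le ξ (lt_add_one ξ)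
  exact absurd (lt_trans (lt_trans h1 h2) (hhx _ (hω₁lim.succ_lt hξ))) (lt_irrefl x)

lemma Iic_small (hc : c.IsRegular) (b : W) : #(Iic b) < c := by
  rw [← Set.Iio_insert]
  refine lt_of_le_of_lt (Cardinal.mk_insert_le) ?_
  exact Cardinal.add_lt_of_lt hc.1 (Cardinal.mk_Iio_ord_toType b)
    (lt_of_lt_of_le Cardinal.one_lt_aleph0 hc.1)

lemma DS (hc : c.IsRegular) (hω₁ : aleph 1 < c)
    (hpow : ∀ γ : Cardinal.{v}, γ < c → γ ^ (Cardinal.aleph0) < c)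
    {ι : Type v} (hι : #ι = c) (E : ι → Set W) (hcnt : ∀ i, (E i).Countable) :
    ∃ R : Set W, R.Countable ∧ ∃ J : Set ι, #J = c ∧
      ∀ i ∈ J, ∀ j ∈ J, i ≠ j → E i ∩ E j = R := by
  classical
  have hwf : WellFounded ((· < ·) : W → W → Prop) := wellFounded_lt
  have hmkW : #W = c := mk_ord_toType c
  have hℵ₀ : (Cardinal.aleph0 : Cardinal.{v}) < c :=
    lt_trans Cardinal.aleph0_lt_aleph_one hω₁
  -- reindex by W
  obtain ⟨e⟩ : Nonempty (W ≃ ι) := by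
    rw [← Cardinal.eq, hmkW, hι]
  set E' : W → Set W := fun w => E (e w) with hE'
  have hcnt' : ∀ w, (E' w).Countable := fun w => hcnt _
  -- the regressive function g
  have hgex : ∀ x : W, ∃ b : W, Pt x → (b < x ∧ ∀ y ∈ E' x ∩ Iio x, y ≤ b) := by
    intro x
    by_cases h : Pt x
    · obtain ⟨b, hb1, hb2⟩ := h (E' x ∩ Iio x) ((hcnt' x).mono inter_subset_left)
        (fun y hy => hy.2)
      exact ⟨b, fun _ => ⟨hb1, hb2⟩⟩
    · exact ⟨x, fun hx => absurd hx h⟩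
  set g : W → W := fun x => (hgex x).choose with hg
  have hgP : ∀ x, Pt x → g x < x := fun x hx => ((hgex x).choose_spec hx).1
  have hgB : ∀ x, Pt x → ∀ y ∈ E' x ∩ Iio x, y ≤ g x := fun x hx => ((hgex x).choose_spec hx).2
  -- pressing down
  obtain ⟨β, hβ⟩ := PD hc hω₁ g hgP
  have hLc : #{x : W // Pt x ∧ g x ≤ β} = c :=
    le_antisymm (le_trans (Cardinal.mk_subtype_le _) (le_of_eq hmkW)) (not_lt.1 hβ)
  -- restrict to x > β
  have hLgt : #{x : W // Pt x ∧ g x ≤ β ∧ β < x} = c := by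
    refine le_antisymm (le_trans (Cardinal.mk_subtype_le _) (le_of_eq hmkW)) (not_lt.1 ?_)
    intro hcon
    have hsub : {x : W | Pt x ∧ g x ≤ β} ⊆ {x : W | Pt x ∧ g x ≤ β ∧ β < x} ∪ Iic β := by
      intro x hx
      rcases le_or_gt x β with h | h
      · exact Or.inr h
      · exact Or.inl ⟨hx.1, hx.2, h⟩
    have h1 := (Cardinal.mk_le_mk_of_subset hsub).trans (Cardinal.mk_union_le _ _)
    simp only [Set.coe_setOf] at h1
    have h2 : c ≤ #{x : W // Pt x ∧ g x ≤ β ∧ β < x} + #(Iic β) :=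
      le_trans (le_of_eq hLc.symm) h1
    exact absurd h2 (not_le.2 (Cardinal.add_lt_of_lt hc.1 hcon (Iic_small hc β)))
  -- key: for such x, the trace of E' x below x is a countable subset of Iic β
  have htrace : ∀ x : W, Pt x → g x ≤ β → β < x → E' x ∩ Iio x = E' x ∩ Iic β ∩ Iio x := by
    intro x h1 h2 h3
    ext y
    constructor
    · rintro ⟨hy1, hy2⟩
      exact ⟨⟨hy1, (hgB x h1 y ⟨hy1, hy2⟩).trans h2⟩, hy2⟩
    · rintro ⟨⟨hy1, _⟩, hy2⟩
      exact ⟨hy1, hy2⟩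
  have htrace' : ∀ x : W, Pt x → g x ≤ β → β < x → E' x ∩ Iio x = E' x ∩ Iic β := by
    intro x h1 h2 h3
    rw [htrace x h1 h2 h3]
    ext y
    refine ⟨fun hy => hy.1, fun hy => ⟨hy, lt_of_le_of_lt hy.2 h3⟩⟩
  -- pigeonhole on the trace
  set ρ : {x : W // Pt x ∧ g x ≤ β ∧ β < x} → {t : Set (Iic β) // #t ≤ Cardinal.aleph0} :=
    fun x => ⟨{y : Iic β | (y : W) ∈ E' x.1}, by
      rw [Cardinal.mk_le_aleph0_iff]
      have : ((Subtype.val ⁻¹' (E' x.1)) : Set (Iic β)).Countable :=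
        (hcnt' x.1).preimage Subtype.val_injective
      exact this.to_subtype⟩ with hρ
  have hcod : #{t : Set (Iic β) // #t ≤ Cardinal.aleph0} < c := by
    refine lt_of_le_of_lt (Cardinal.mk_bounded_set_le _ _) ?_
    exact hpow _ (max_lt (Iic_small hc β) hℵ₀)
  obtain ⟨t₀, ht₀⟩ := pigeon hc ρ hLgt hcod
  set RW : Set W := Subtype.val '' t₀.1 with hRW
  have hRWc : RW.Countable := by
    have h1 : t₀.1.Countable := Set.countable_coe_iff.1 (Cardinal.mk_le_aleph0_iff.1 t₀.2)
    exact h1.image _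
  -- points whose trace is exactly RW
  set Q : Set W := {w : W | E' w ∩ Iio w = RW} with hQ
  have hQc : #Q = c := by
    refine le_antisymm (le_trans (Cardinal.mk_subtype_le _) (le_of_eq hmkW)) ?_
    refine le_trans (le_of_eq ht₀.symm) ?_
    have hmem : ∀ x : {a // ρ a = t₀}, (x.1.1 : W) ∈ Q := by
      intro x
      have hset : ({y : Iic β | (y : W) ∈ E' x.1.1} : Set (Iic β)) = t₀.1 :=
        congrArg Subtype.val x.2
      show E' x.1.1 ∩ Iio x.1.1 = RW
      rw [htrace' x.1.1 x.1.2.1 x.1.2.2.1 x.1.2.2.2, hRW, ← hset]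
      ext y
      constructor
      · rintro ⟨hy1, hy2⟩
        exact ⟨⟨y, hy2⟩, hy1, rfl⟩
      · rintro ⟨y', hy', rfl⟩
        exact ⟨hy', y'.2⟩
    refine Cardinal.mk_le_of_injective (f := fun x : {a // ρ a = t₀} => (⟨x.1.1, hmem x⟩ : Q)) ?_
    intro a b hab
    simp only [Subtype.mk.injEq] at hab
    exact Subtype.ext (Subtype.ext hab)
  -- the recursive choice of a separated subfamily
  have key : ∀ (w : W) (ih : ∀ v, v < w → W), ∃ x : W, x ∈ Q ∧ ∀ v (hv : v < w),
      ih v hv < x ∧ ∀ y ∈ E' (ih v hv), y < x := by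
    intro w ih
    set D : Set W := ⋃ v : Iio w, insert (ih v.1 v.2) (E' (ih v.1 v.2)) with hD
    have hDsmall : #D < c := by
      refine lt_of_le_of_lt Cardinal.mk_iUnion_le_sum_mk ?_
      refine lt_of_le_of_lt (Cardinal.sum_le_sum _ (fun _ => (Cardinal.aleph0 : Cardinal.{v}))
        (fun v => ?_)) ?_
      · rw [Cardinal.mk_le_aleph0_iff]
        exact (((hcnt' _).insert _)).to_subtype
      · rw [Cardinal.sum_const']
        exact Cardinal.mul_lt_of_lt hc.1 (Cardinal.mk_Iio_ord_toType w) hℵ₀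
    obtain ⟨b, hb⟩ := W_bound hc hDsmall
    have hxe : ∃ x : W, x ∈ Q ∧ b < x := by
      by_contra hcon2
      push_neg at hcon2
      have hsub : Q ⊆ Iic b := fun x hx => hcon2 x hx
      have h5 := (Cardinal.mk_le_mk_of_subset hsub).trans_lt (Iic_small hc b)
      rw [hQc] at h5
      exact lt_irrefl _ h5
    obtain ⟨x, hxQ, hbx⟩ := hxe
    refine ⟨x, hxQ, fun v hv => ⟨?_, fun y hy => ?_⟩⟩
    · exact lt_trans (hb _ (mem_iUnion.2 ⟨⟨v, hv⟩, mem_insert _ _⟩)) hbx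
    · exact lt_trans (hb _ (mem_iUnion.2 ⟨⟨v, hv⟩, mem_insert_of_mem _ hy⟩)) hbx
  set pick : W → W := hwf.fix (fun w ih => (key w ih).choose) with hpick
  have pick_eq : ∀ w, pick w = (key w (fun v _ => pick v)).choose := fun w => by
    rw [hpick]; exact hwf.fix_eq _ w
  have pickQ : ∀ w, E' (pick w) ∩ Iio (pick w) = RW := fun w => by
    rw [pick_eq w]; exact (key w (fun v _ => pick v)).choose_spec.1
  have pick_mono : ∀ v w : W, v < w → pick v < pick w := by
    intro v w hv
    rw [pick_eq w]
    exact ((key w (fun v _ => pick v)).choose_spec.2 v hv).1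
  have pickE : ∀ v w : W, v < w → ∀ y ∈ E' (pick v), y < pick w := by
    intro v w hv y hy
    rw [pick_eq w]
    exact ((key w (fun v _ => pick v)).choose_spec.2 v hv).2 y hy
  have main : ∀ v w : W, v < w → E' (pick v) ∩ E' (pick w) = RW := by
    intro v w hvw
    apply Set.Subset.antisymm
    · intro y hy
      rw [← pickQ w]
      exact ⟨hy.2, pickE v w hvw y hy.1⟩
    · intro y hy
      constructor
      · have h6 := pickQ v
        rw [← h6] at hy
        exact hy.1
      · have h6 := pickQ w
        rw [← h6] at hy
        exact hy.1
  refine ⟨RW, hRWc, range (fun w : W => e (pick w)), ?_, ?_⟩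
  · rw [Cardinal.mk_range_eq _ ?inj, hmkW]
    case inj =>
      intro a b hab
      have h7 : pick a = pick b := e.injective hab
      rcases lt_trichotomy a b with h | h | h
      · exact absurd h7 (ne_of_lt (pick_mono a b h))
      · exact h
      · exact absurd h7.symm (ne_of_lt (pick_mono b a h))
  · rintro i ⟨v, rfl⟩ j ⟨w, rfl⟩ hij
    have hvw : v ≠ w := fun h => hij (by rw [h])
    rcases hvw.lt_or_gt with h | h
    · exact main v w h
    · rw [Set.inter_comm]
      exact main w v h


end WSec


section Main

lemma KNode.le_refl (n : KNode.{u}) : n.le n := ⟨le_rfl, fun _ _ => rfl⟩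

lemma KCond.le_refl' {lam : Ordinal.{u}} (p : KCond lam) : p.le p := by
  refine ⟨le_rfl, ?_, fun a h => h, fun a n h => ⟨n, h, KNode.le_refl n⟩⟩
  ext s
  exact ⟨fun h => h.1, fun h => ⟨h, p.T_le s h⟩⟩

lemma mk_Iio_omegaOne : #(Iio omegaOne.{u}) = (Cardinal.aleph 1 : Cardinal.{u+1}) := by
  rw [omegaOne, Ordinal.mk_Iio_ordinal, Cardinal.card_ord, Cardinal.lift_aleph]
  norm_num

lemma mk_KNode_le : #(KNode.{u}) ≤ (2 : Cardinal.{u+1}) ^ (Cardinal.aleph 1) := by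
  classical
  have h1 : #(↥(Iio omegaOne.{u})) = (Cardinal.aleph 1 : Cardinal.{u+1}) := mk_Iio_omegaOne
  have hinj : Function.Injective (fun n : KNode.{u} =>
      ((⟨n.len, n.len_lt⟩, fun o : ↥(Iio omegaOne.{u}) =>
        (⟨n.val o.1, n.val_lt o.1⟩ : ↥(Iio omegaOne.{u}))) :
        ↥(Iio omegaOne.{u}) × (↥(Iio omegaOne.{u}) → ↥(Iio omegaOne.{u})))) := by
    intro n m h
    rw [Prod.mk.injEq] at h
    obtain ⟨h1', h2'⟩ := h
    have hlen : n.len = m.len := congrArg Subtype.val h1'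
    have hval : n.val = m.val := by
      funext o
      by_cases ho : o < omegaOne.{u}
      · exact congrArg Subtype.val (congrFun h2' ⟨o, ho⟩)
      · rw [n.val_eq_zero o (fun hlt => ho (hlt.trans n.len_lt)),
          m.val_eq_zero o (fun hlt => ho (hlt.trans m.len_lt))]
    cases n; cases m
    simp_all
  calc #(KNode.{u}) ≤ #(↥(Iio omegaOne.{u}) × (↥(Iio omegaOne.{u}) → ↥(Iio omegaOne.{u}))) :=
        Cardinal.mk_le_of_injective hinj
  _ = (Cardinal.aleph 1) * ((Cardinal.aleph 1) ^ (Cardinal.aleph 1)) := by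
        rw [Cardinal.mk_prod, Cardinal.lift_id, Cardinal.lift_id, h1, ← Cardinal.power_def, h1]
  _ = (Cardinal.aleph 1) * (2 ^ (Cardinal.aleph 1)) := by
        rw [Cardinal.power_self_eq (Cardinal.aleph0_le_aleph 1)]
  _ ≤ (2 ^ (Cardinal.aleph 1)) * (2 ^ (Cardinal.aleph 1)) :=
        mul_le_mul_left (Cardinal.cantor _).le _
  _ = 2 ^ (Cardinal.aleph 1) :=
        Cardinal.mul_eq_self ((Cardinal.aleph0_le_aleph 1).trans (Cardinal.cantor _).le)

lemma mk_P1_le : #(↥(Iio omegaOne.{u}) × {T : Set KNode.{u} // #T ≤ Cardinal.aleph 1}) ≤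
    (2 : Cardinal.{u+1}) ^ (Cardinal.aleph 1) := by
  have h2 : #{T : Set KNode.{u} // #T ≤ Cardinal.aleph 1} ≤
      (2 : Cardinal.{u+1}) ^ (Cardinal.aleph 1) := by
    refine le_trans (Cardinal.mk_bounded_set_le _ _) ?_
    have hb : (max #(KNode.{u}) Cardinal.aleph0) ≤ (2 : Cardinal.{u+1}) ^ (Cardinal.aleph 1) :=
      max_le mk_KNode_le ((Cardinal.aleph0_le_aleph 1).trans (Cardinal.cantor _).le)
    refine le_trans (Cardinal.power_le_power_right hb) ?_
    rw [← Cardinal.power_mul, Cardinal.mul_eq_self (Cardinal.aleph0_le_aleph 1)]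

  calc #(↥(Iio omegaOne.{u}) × {T : Set KNode.{u} // #T ≤ Cardinal.aleph 1})
      = #(↥(Iio omegaOne.{u})) * #{T : Set KNode.{u} // #T ≤ Cardinal.aleph 1} := by
        rw [Cardinal.mk_prod, Cardinal.lift_id, Cardinal.lift_id]
  _ ≤ (2 ^ (Cardinal.aleph 1)) * (2 ^ (Cardinal.aleph 1)) := by
        refine mul_le_mul' ?_ h2
        rw [mk_Iio_omegaOne]
        exact (Cardinal.cantor _).le
  _ = 2 ^ (Cardinal.aleph 1) :=
        Cardinal.mul_eq_self ((Cardinal.aleph0_le_aleph 1).trans (Cardinal.cantor _).le)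

lemma KCond.merge {lam : Ordinal.{u}} (p q : KCond lam) (hη : p.η = q.η) (hT : p.T = q.T)
    (hagree : ∀ a, p.f a ≠ none → q.f a ≠ none → p.f a = q.f a) :
    ∃ r : KCond lam, r.le p ∧ r.le q := by
  classical
  refine ⟨⟨p.η, p.η_lt, p.T, p.T_le, p.T_closed, p.T_card, p.T_normal, p.T_splitting,
    fun a => if p.f a = none then q.f a else p.f a, ?_, ?_⟩,
    ⟨le_rfl, ?_, ?_, ?_⟩, ⟨le_of_eq hη.symm, ?_, ?_, ?_⟩⟩
  · refine Set.Countable.mono ?_ (p.f_dom.union q.f_dom)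
    intro a ha
    simp only [mem_setOf_eq] at ha
    by_cases hp : p.f a = none
    · simp only [if_pos hp] at ha
      exact Or.inr ha
    · exact Or.inl hp
  · intro a n h
    by_cases hp : p.f a = none
    · simp only [if_pos hp] at h
      obtain ⟨h1, h2, h3⟩ := q.f_spec a n h
      exact ⟨h1, hT ▸ h2, hη ▸ h3⟩
    · simp only [if_neg hp] at h
      exact p.f_spec a n h
  · ext s
    exact ⟨fun h => h.1, fun h => ⟨h, p.T_le s h⟩⟩
  · intro a ha
    show ¬ (if p.f a = none then q.f a else p.f a) = none
    simp only [if_neg ha]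
    exact ha
  · intro a n h
    refine ⟨n, ?_, KNode.le_refl n⟩
    have hne : p.f a ≠ none := by simp [h]
    show (if p.f a = none then q.f a else p.f a) = some n
    simp only [if_neg hne]
    exact h
  · rw [show ({s ∈ p.T | s.len ≤ q.η} : Set KNode) = {s ∈ q.T | s.len ≤ q.η} by rw [hT]]
    ext s
    exact ⟨fun h => h.1, fun h => ⟨h, q.T_le s h⟩⟩
  · intro a ha
    show ¬ (if p.f a = none then q.f a else p.f a) = none
    by_cases hp : p.f a = none
    · simp only [if_pos hp]
      exact ha
    · simp only [if_neg hp]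
      exact hp
  · intro a n h
    refine ⟨n, ?_, KNode.le_refl n⟩
    show (if p.f a = none then q.f a else p.f a) = some n
    by_cases hp : p.f a = none
    · simp only [if_pos hp]
      exact h
    · have hqne : q.f a ≠ none := by simp [h]
      have heq := hagree a hp hqne
      simp only [if_neg hp]
      rw [heq]
      exact h

/-- For an uncountable ordinal `λ` and a regular cardinal `μ` with
`μ > 2^{ω₁}` and `γ^ω < μ` for all `γ < μ`, the forcing `K_λ` is `μ`-Knaster: every
family of `μ`-many conditions contains a subfamily of size `μ` of pairwise compatible
conditions. -/
theorem KCond.knaster (lam : Ordinal.{u}) (hlam : omegaOne ≤ lam)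
    (μ : Cardinal.{u + 1}) (hreg : μ.IsRegular)
    (hμ₁ : (2 : Cardinal.{u + 1}) ^ (Cardinal.aleph 1) < μ)
    (hμ₂ : ∀ γ : Cardinal.{u + 1}, γ < μ → γ ^ (Cardinal.aleph 0) < μ)
    (A : Set (KCond.{u} lam)) (hA : Cardinal.mk A = μ) :
    ∃ B ⊆ A, Cardinal.mk B = μ ∧
      ∀ p ∈ B, ∀ q ∈ B, ∃ r : KCond lam, r.le p ∧ r.le q := by
  classical
  have hℵ₁μ : (Cardinal.aleph 1 : Cardinal.{u+1}) < μ := lt_trans (Cardinal.cantor _) hμ₁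
  have hpow : ∀ γ : Cardinal.{u+1}, γ < μ → γ ^ (Cardinal.aleph0 : Cardinal.{u+1}) < μ := by
    intro γ hγ
    have h := hμ₂ γ hγ
    rwa [Cardinal.aleph_zero] at h
  -- Step 1: fix (η, T)
  set F1 : ↥A → ↥(Iio omegaOne.{u}) × {T : Set KNode.{u} // #T ≤ Cardinal.aleph 1} :=
    fun p => (⟨p.1.η, p.1.η_lt⟩, ⟨p.1.T, p.1.T_card⟩) with hF1
  obtain ⟨b₁, hb₁⟩ := pigeon hreg F1 hA (lt_of_le_of_lt mk_P1_le hμ₁)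
  set A₁ : Type (u+1) := {a : ↥A // F1 a = b₁} with hA₁t
  have hηeq : ∀ x y : A₁, x.1.1.η = y.1.1.η := by
    intro x y
    have hx := congrArg (fun z => z.1.1) x.2
    have hy := congrArg (fun z => z.1.1) y.2
    exact hx.trans hy.symm
  have hTeq : ∀ x y : A₁, x.1.1.T = y.1.1.T := by
    intro x y
    have hx := congrArg (fun z => z.2.1) x.2
    have hy := congrArg (fun z => z.2.1) y.2
    exact hx.trans hy.symm
  -- Step 2: Δ-system on the domains
  set dom : A₁ → Set Ordinal.{u} := fun x => {a | x.1.1.f a ≠ none} with hdomdef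
  have hdomc : ∀ x, (dom x).Countable := fun x => x.1.1.f_dom
  set U : Set Ordinal.{u} := ⋃ x : A₁, dom x with hUdef
  have hdomU : ∀ x, dom x ⊆ U := fun x => subset_iUnion dom x
  have hU : #U ≤ μ := by
    refine le_trans Cardinal.mk_iUnion_le_sum_mk ?_
    refine le_trans (Cardinal.sum_le_sum _ (fun _ => (Cardinal.aleph0 : Cardinal.{u+1}))
      (fun x => ?_)) ?_
    · rw [Cardinal.mk_le_aleph0_iff]
      exact (hdomc x).to_subtype
    · rw [Cardinal.sum_const']
      have : #A₁ = μ := hb₁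
      rw [this, Cardinal.mul_eq_max hreg.aleph0_le le_rfl]
      exact max_le le_rfl hreg.aleph0_le
  obtain ⟨e₀⟩ : Nonempty (↥U ↪ μ.ord.ToType) := by
    rw [← Cardinal.le_def, mk_ord_toType]
    exact hU
  set E : A₁ → Set (μ.ord.ToType) := fun i => (fun x : ↥U => e₀ x) '' {x : ↥U | x.1 ∈ dom i}
    with hEdef
  have hEc : ∀ i, (E i).Countable := by
    intro i
    have h : ({x : ↥U | x.1 ∈ dom i}).Countable := (hdomc i).preimage Subtype.val_injective
    exact h.image _
  have hA₁ : #A₁ = μ := hb₁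
  obtain ⟨RW, hRWc, J, hJ, hJint⟩ := DS hreg hℵ₁μ hpow hA₁ E hEc
  set R : Set Ordinal.{u} := Subtype.val '' {x : ↥U | e₀ x ∈ RW} with hRdef
  have hRc : R.Countable := ((hRWc.preimage e₀.injective)).image _
  have hdomR : ∀ i ∈ J, ∀ j ∈ J, i ≠ j → dom i ∩ dom j = R := by
    intro i hi j hj hij
    have hE := hJint i hi j hj hij
    ext a
    constructor
    · rintro ⟨hai, haj⟩
      have haU : a ∈ U := hdomU i hai
      have h1 : e₀ ⟨a, haU⟩ ∈ E i :=
        mem_image_of_mem _ (show (⟨a, haU⟩ : ↥U) ∈ {x : ↥U | x.1 ∈ dom i} from hai)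
      have h2 : e₀ ⟨a, haU⟩ ∈ E j :=
        mem_image_of_mem _ (show (⟨a, haU⟩ : ↥U) ∈ {x : ↥U | x.1 ∈ dom j} from haj)
      have h3 : e₀ ⟨a, haU⟩ ∈ RW := by
        rw [← hE]
        exact ⟨h1, h2⟩
      exact ⟨⟨a, haU⟩, h3, rfl⟩
    · rintro ⟨x, hx, rfl⟩
      have hx' : e₀ x ∈ E i ∩ E j := by
        rw [hE]
        exact hx
      constructor
      · obtain ⟨y, hy, hye⟩ := hx'.1
        have hyx : y = x := e₀.injective hye
        rwa [← hyx]
      · obtain ⟨y, hy, hye⟩ := hx'.2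
        have hyx : y = x := e₀.injective hye
        rwa [← hyx]
  -- Step 3: fix the restriction to the root
  set F2 : ↥J → (↥R → Option KNode.{u}) := fun i => fun x => i.1.1.1.f x.1 with hF2
  have hcod2 : #(↥R → Option KNode.{u}) < μ := by
    have hbase : #(Option KNode.{u}) ≤ (2 : Cardinal.{u+1}) ^ (Cardinal.aleph 1) := by
      rw [Cardinal.mk_option]
      have hone : (1 : Cardinal.{u+1}) ≤ (2 : Cardinal.{u+1}) ^ (Cardinal.aleph 1) :=
        Cardinal.one_le_iff_ne_zero.2 (Cardinal.power_ne_zero _ two_ne_zero)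
      refine le_trans (add_le_add mk_KNode_le hone) ?_
      exact le_of_eq (Cardinal.add_eq_self ((Cardinal.aleph0_le_aleph 1).trans
        (Cardinal.cantor _).le))
    have hexp : #(↥R) ≤ (Cardinal.aleph0 : Cardinal.{u+1}) := by
      rw [Cardinal.mk_le_aleph0_iff]
      exact hRc.to_subtype
    have h1 : #(↥R → Option KNode.{u}) = #(Option KNode.{u}) ^ #(↥R) :=
      (Cardinal.power_def _ _).symm
    rw [h1]
    calc #(Option KNode.{u}) ^ #(↥R)
        ≤ ((2 : Cardinal.{u+1}) ^ (Cardinal.aleph 1)) ^ #(↥R) :=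
          Cardinal.power_le_power_right hbase
    _ ≤ ((2 : Cardinal.{u+1}) ^ (Cardinal.aleph 1)) ^ (Cardinal.aleph0 : Cardinal.{u+1}) :=
          Cardinal.power_le_power_left (Cardinal.power_ne_zero _ two_ne_zero) hexp
    _ = (2 : Cardinal.{u+1}) ^ ((Cardinal.aleph 1) * (Cardinal.aleph0 : Cardinal.{u+1})) := by
          rw [Cardinal.power_mul]
    _ = (2 : Cardinal.{u+1}) ^ (Cardinal.aleph 1) := by
          rw [Cardinal.mul_eq_max (Cardinal.aleph0_le_aleph 1) le_rfl,
            max_eq_left (Cardinal.aleph0_le_aleph 1)]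
    _ < μ := hμ₁
  obtain ⟨g₀, hg₀⟩ := pigeon hreg F2 hJ hcod2
  -- Step 4: assemble
  set toC : {x : ↥J // F2 x = g₀} → KCond.{u} lam := fun x => x.1.1.1.1 with htoC
  have hinj : Function.Injective toC := by
    intro x y h
    exact Subtype.ext (Subtype.ext (Subtype.ext (Subtype.ext h)))
  refine ⟨range toC, ?_, ?_, ?_⟩
  · rintro p ⟨x, rfl⟩
    exact x.1.1.1.2
  · rw [Cardinal.mk_range_eq toC hinj]
    exact hg₀
  · rintro p ⟨x, rfl⟩ q ⟨y, rfl⟩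
    apply KCond.merge
    · exact hηeq x.1.1 y.1.1
    · exact hTeq x.1.1 y.1.1
    · intro a hpa hqa
      by_cases hxy : x.1.1 = y.1.1
      · exact congrArg (fun z : A₁ => z.1.1.f a) hxy
      · have hR := hdomR x.1.1 x.1.2 y.1.1 y.1.2 hxy
        have haR : a ∈ R := by
          rw [← hR]
          exact ⟨hpa, hqa⟩
        have h1 : F2 x.1 = g₀ := x.2
        have h2 : F2 y.1 = g₀ := y.2
        exact congrFun (h1.trans h2.symm) ⟨a, haR⟩

end Main
end
end

section
/- Suppose V ⊆ W are models of ZFC, T ∈ V is a tree of height μ for a regular uncountable cardinal μ of W, the pair (V, W) satisfies the μ-approximation property, and every level of T has size less than some cardinal θ of V with θ ≤ μ. Then every cofinal branch of T lying in W already lies in V. (In particular, if a forcing P has the ω₁-approximation property, then P adds no new cofinal branches to trees of height ω₁ whose branches' initial segments lie in V.) -/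
noncomputable section

open Cardinal Ordinal Set

theorem treeHt_strictMono {T : Type*} [PartialOrder T]
    (hwo : ∀ t : T, IsWellOrder {s : T // s < t} (fun a b => (a : T) < (b : T)))
    {s t : T} (h : s < t) : treeHt hwo s < treeHt hwo t := by
  letI := hwo t
  letI := hwo s
  have key : treeHt hwo s =
      @Ordinal.typein {r : T // r < t} (fun a b => (a : T) < (b : T)) (hwo t) ⟨s, h⟩ := by
    rw [← Ordinal.type_subrel]
    refine Ordinal.type_eq.2 ⟨⟨⟨fun r => ⟨⟨r.1, lt_trans r.2 h⟩, r.2⟩,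
      fun x => ⟨x.1.1, x.2⟩, fun _ => rfl, fun _ => rfl⟩, Iff.rfl⟩⟩
  rw [key]
  exact Ordinal.typein_lt_type _ _

theorem treeHt_mono {T : Type*} [PartialOrder T]
    (hwo : ∀ t : T, IsWellOrder {s : T // s < t} (fun a b => (a : T) < (b : T)))
    {s t : T} (h : s ≤ t) : treeHt hwo s ≤ treeHt hwo t := by
  rcases eq_or_lt_of_le h with rfl | h
  · exact le_rfl
  · exact (treeHt_strictMono hwo h).le

/-- Suppose `V ⊆ W` are models of ZFC, `T ∈ V` is a tree of height `μ`
for a regular uncountable cardinal `μ`, the pair `(V, W)` has the `μ`-approximation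
property, and every level of `T` has size `< θ` for some cardinal `θ ≤ μ`.  Then every
cofinal branch of `T` lying in `W` already lies in `V`.  Here the inner model `V` is
abstracted by a predicate `InV` on subsets of `T` (`InV x` meaning `x ∈ V`), closed
under intersections and containing the cones of predecessors of nodes (this captures
`T ∈ V`), and the `μ`-approximation property is the hypothesis `happrox`. -/
theorem branch_in_ground_model_of_approximation {T : Type*} [PartialOrder T]
    (hwo : ∀ t : T, IsWellOrder {s : T // s < t} (fun a b => (a : T) < (b : T)))
    (μ θ : Cardinal) (hμreg : μ.IsRegular) (hμunc : Cardinal.aleph0 < μ)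
    (hθμ : θ ≤ μ)
    -- `T` has height `μ`:
    (hht : ∀ t : T, treeHt hwo t < μ.ord)
    -- every level of `T` has size less than `θ`:
    (hlevel : ∀ α : Ordinal, Cardinal.mk {t : T | treeHt hwo t = α} < θ)
    (InV : Set T → Prop)
    -- `V` is closed under intersections:
    (hV_inter : ∀ a b : Set T, InV a → InV b → InV (a ∩ b))
    -- `T ∈ V`: the set of predecessors (with the node) of any node lies in `V`:
    (hV_pred : ∀ t : T, InV {s : T | s ≤ t})
    -- the `μ`-approximation property for the pair `(V, W)`:
    (happrox : ∀ x : Set T,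
      (∀ z : Set T, InV z → Cardinal.mk z < μ → InV (x ∩ z)) → InV x)
    -- `b` is a cofinal branch of `T` (in `W`):
    (b : Set T) (hchain : IsChain (· ≤ ·) b)
    (hdc : ∀ t ∈ b, ∀ s : T, s ≤ t → s ∈ b)
    (hcof : ∀ α < μ.ord, ∃ t ∈ b, treeHt hwo t = α) :
    InV b := by
  apply happrox
  intro z hz hzcard
  have hμlim : Order.IsSuccLimit μ.ord := Cardinal.isSuccLimit_ord hμreg.aleph0_le
  set α := ⨆ s : z, (treeHt hwo s.1 + 1) with hαdef
  have hα : α < μ.ord := by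
    apply Cardinal.iSup_lt_ord_of_isRegular hμreg hzcard
    intro i
    rw [Ordinal.add_one_eq_succ]
    exact hμlim.succ_lt (hht _)
  obtain ⟨t, htb, htα⟩ := hcof α hα
  have hb_eq : b ∩ z = {s : T | s ≤ t} ∩ z := by
    ext s
    simp only [mem_inter_iff, mem_setOf_eq]
    constructor
    · rintro ⟨hsb, hsz⟩
      refine ⟨?_, hsz⟩
      have hlt : treeHt hwo s < treeHt hwo t := by
        rw [htα]
        calc treeHt hwo s < treeHt hwo s + 1 := by
              rw [Ordinal.add_one_eq_succ]; exact Order.lt_succ _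
          _ ≤ α := Ordinal.le_iSup (fun s : z => treeHt hwo s.1 + 1) (⟨s, hsz⟩ : z)
      rcases eq_or_ne s t with rfl | hne
      · exact le_rfl
      · rcases hchain hsb htb hne with h | h
        · exact h
        · exact absurd (treeHt_mono hwo h) (not_le.2 hlt)
    · rintro ⟨hst, hsz⟩
      exact ⟨hdc t htb s hst, hsz⟩
  rw [hb_eq]
  exact hV_inter _ _ (hV_pred t) hz
end
end
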